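/- arXiv:1801.03887 — 5 statements merged into one kernel-verified Lean document; each statement's English description precedes it below -/
import Mathlib

section
/- Let n ≥ 3, let A be a commutative ring with unit and I an ideal of A. Then E^◁(n+1, A; I²), the normal subgroup of E(n+1, A) generated by E(n+1, A; I²), is contained in the subgroup K(I) of SL_{n+1}(A) generated by the elementary matrices e_{i,j}(a) with 1 ≤ i ≠ j ≤ n+1, {i,j} ≠ {1, n+1}, and a ∈ I. -/
set_option linter.unusedSectionVars false
set_option linter.unreachableTactic false
set_option linter.unnecessarySeqFocus false
set_option linter.unusedTactic false
set_option maxHeartbeats 1000000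

open Matrix

section MatrixLemmas
variable {m : Type*} [Fintype m] [DecidableEq m] {A : Type*} [CommRing A]

lemma mulVV (v w v' w' : m → A) :
    vecMulVec v w * vecMulVec v' w' = (w ⬝ᵥ v') • vecMulVec v w' := by
  ext p r
  simp only [mul_apply, vecMulVec_apply, Matrix.smul_apply, smul_eq_mul, dotProduct, Finset.sum_mul]
  exact Finset.sum_congr rfl fun k _ => by ring

lemma vv_add_right (v w w' : m → A) :
    vecMulVec v (w + w') = vecMulVec v w + vecMulVec v w' := by
  ext p r; simp [vecMulVec_apply, mul_add]

lemma vv_add_left (v v' w : m → A) :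
    vecMulVec (v + v') w = vecMulVec v w + vecMulVec v' w := by
  ext p r; simp [vecMulVec_apply, add_mul]

lemma vv_neg_right (v w : m → A) : vecMulVec v (-w) = -vecMulVec v w := by
  ext p r; simp [vecMulVec_apply]

lemma vv_zero_right (v : m → A) : vecMulVec v (0 : m → A) = 0 := by
  ext p r; simp [vecMulVec_apply]

lemma vv_smul_right (c : A) (v w : m → A) :
    vecMulVec v (c • w) = c • vecMulVec v w := by
  ext p r; simp [vecMulVec_apply, smul_eq_mul]; ring

lemma vv_single (i j : m) (c d : A) :
    vecMulVec (Pi.single i c) (Pi.single j d) = Matrix.single i j (c * d) := by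
  ext p r
  simp [vecMulVec_apply, Pi.single_apply, Matrix.single, ite_and, eq_comm]
  split_ifs <;> simp_all

lemma neg_single (i : m) (a : A) : (-Pi.single i a : m → A) = Pi.single i (-a) := by
  funext k; by_cases h : k = i <;> simp [Pi.single_apply, h]

lemma addWmul (v w w' : m → A) (h : w ⬝ᵥ v = 0) :
    (1 + vecMulVec v w) * (1 + vecMulVec v w') = 1 + vecMulVec v (w + w') := by
  rw [mul_add, add_mul, add_mul, mul_one, one_mul, mulVV, h, zero_smul, add_zero, vv_add_right,
    mul_one]
  abel

lemma addVmul (v v' w : m → A) (h : w ⬝ᵥ v' = 0) :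
    (1 + vecMulVec v w) * (1 + vecMulVec v' w) = 1 + vecMulVec (v + v') w := by
  rw [mul_add, add_mul, add_mul, mul_one, one_mul, mulVV, h, zero_smul, add_zero, vv_add_left,
    mul_one]
  abel

lemma comm_abstract {R : Type*} [Ring R] (X Y : R) (hX : X * X = 0) (hY : Y * Y = 0)
    (hYX : Y * X = 0) : (1 + X) * (1 + Y) * (1 - X) * (1 - Y) = 1 + X * Y := by
  have hX' : ∀ t : R, X * (X * t) = 0 := fun t => by rw [← mul_assoc, hX, zero_mul]
  have hY' : ∀ t : R, Y * (Y * t) = 0 := fun t => by rw [← mul_assoc, hY, zero_mul]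
  have hYX' : ∀ t : R, Y * (X * t) = 0 := fun t => by rw [← mul_assoc, hYX, zero_mul]
  simp only [mul_add, add_mul, mul_sub, sub_mul, mul_one, one_mul, hX, hY, hYX, hX', hY', hYX',
    mul_assoc, mul_zero, zero_mul, smul_zero]
  abel

lemma comm4 (v w v' w' : m → A) (h1 : w ⬝ᵥ v = 0) (h2 : w' ⬝ᵥ v' = 0) (h3 : w' ⬝ᵥ v = 0) :
    (1 + vecMulVec v w) * (1 + vecMulVec v' w') * (1 + vecMulVec v (-w)) *
      (1 + vecMulVec v' (-w')) = 1 + (w ⬝ᵥ v') • vecMulVec v w' := by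
  rw [vv_neg_right, vv_neg_right, ← sub_eq_add_neg, ← sub_eq_add_neg,
    comm_abstract _ _ (by rw [mulVV, h1, zero_smul]) (by rw [mulVV, h2, zero_smul])
      (by rw [mulVV, h3, zero_smul]), mulVV]

end MatrixLemmas
section ChooseP
/-- Choice of a spare index avoiding `i`, `j` and not forming a "corner" pair with them. -/
lemma choose_p {n : ℕ} (hn : 3 ≤ n) (i j : Fin (n + 1)) :
    ∃ p : Fin (n + 1), p ≠ i ∧ p ≠ j ∧ ¬(p = 0 ∧ i = Fin.last n) ∧ ¬(p = Fin.last n ∧ i = 0) ∧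
      ¬(p = 0 ∧ j = Fin.last n) ∧ ¬(p = Fin.last n ∧ j = 0) := by
  by_cases h1 : (i : ℕ) ≠ 1 ∧ (j : ℕ) ≠ 1
  · exact ⟨⟨1, by omega⟩, by simp [Fin.ext_iff, Fin.last] <;> omega,
      by simp [Fin.ext_iff, Fin.last] <;> omega, by simp [Fin.ext_iff, Fin.last] <;> omega,
      by simp only [Fin.ext_iff, Fin.val_last, Fin.val_zero] <;> omega, by simp only [Fin.ext_iff, Fin.val_last, Fin.val_zero] <;> omega,
      by simp only [Fin.ext_iff, Fin.val_last, Fin.val_zero] <;> omega⟩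
  · by_cases h2 : (i : ℕ) ≠ 2 ∧ (j : ℕ) ≠ 2
    · exact ⟨⟨2, by omega⟩, by simp [Fin.ext_iff, Fin.last] <;> omega,
        by simp [Fin.ext_iff, Fin.last] <;> omega, by simp [Fin.ext_iff, Fin.last] <;> omega,
        by simp only [Fin.ext_iff, Fin.val_last, Fin.val_zero] <;> omega, by simp only [Fin.ext_iff, Fin.val_last, Fin.val_zero] <;> omega,
        by simp only [Fin.ext_iff, Fin.val_last, Fin.val_zero] <;> omega⟩
    · push_neg at h1 h2
      refine ⟨0, ?_, ?_, ?_, ?_, ?_, ?_⟩ <;> simp only [ne_eq, Fin.ext_iff, Fin.val_last, Fin.val_zero] <;> omega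

end ChooseP

section Main

open Matrix

variable {n : ℕ} {A : Type*} [CommRing A] (I : Ideal A)
  (K : Subgroup (Matrix.SpecialLinearGroup (Fin (n + 1)) A))

/-- `M` is the underlying matrix of an element of `K`. -/
def GK (M : Matrix (Fin (n + 1)) (Fin (n + 1)) A) : Prop :=
  ∃ x ∈ K, (x : Matrix (Fin (n + 1)) (Fin (n + 1)) A) = M

variable {I K}

lemma GK_one : GK K (1 : Matrix (Fin (n + 1)) (Fin (n + 1)) A) := ⟨1, one_mem K, rfl⟩

lemma GK_mul {M M' : Matrix (Fin (n + 1)) (Fin (n + 1)) A} (h : GK K M) (h' : GK K M') :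
    GK K (M * M') := by
  obtain ⟨x, hx, rfl⟩ := h
  obtain ⟨y, hy, rfl⟩ := h'
  exact ⟨x * y, mul_mem hx hy, rfl⟩

/-- The key hypothesis on `K`: it contains all non-corner elementary matrices of level `I`. -/
def KGen (I : Ideal A) (K : Subgroup (Matrix.SpecialLinearGroup (Fin (n + 1)) A)) : Prop :=
  ∀ (i j : Fin (n + 1)) (a : A), i ≠ j → ¬(i = 0 ∧ j = Fin.last n) →
    ¬(i = Fin.last n ∧ j = 0) → a ∈ I → GK K (1 + Matrix.single i j a)

end Main
section Main2
open Matrix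

variable {n : ℕ} {A : Type*} [CommRing A] {I : Ideal A}
  {K : Subgroup (Matrix.SpecialLinearGroup (Fin (n + 1)) A)}

lemma dot_sum (w : Fin (n + 1) → A) {ι : Type*} (t : Finset ι) (z : ι → Fin (n + 1) → A) :
    w ⬝ᵥ (∑ i ∈ t, z i) = ∑ i ∈ t, w ⬝ᵥ z i := by
  simp only [dotProduct, Finset.sum_apply, Finset.mul_sum]
  exact Finset.sum_comm

/-- splitting a sum in the `w`-slot. -/
lemma GK_sum_right {ι : Type*} (v : Fin (n + 1) → A) (s : Finset ι) (z : ι → Fin (n + 1) → A)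
    (horth : ∀ i ∈ s, z i ⬝ᵥ v = 0) (hg : ∀ i ∈ s, GK K (1 + vecMulVec v (z i))) :
    GK K (1 + vecMulVec v (∑ i ∈ s, z i)) := by
  classical
  induction s using Finset.induction_on with
  | empty => simpa [vv_zero_right] using (GK_one : GK K _)
  | insert a t hnotmem ih =>
    rw [Finset.sum_insert hnotmem, ← addWmul _ _ _ (horth a (t.mem_insert_self a))]
    exact GK_mul (hg a (t.mem_insert_self a))
      (ih (fun i hi => horth i (Finset.mem_insert_of_mem hi))
          (fun i hi => hg i (Finset.mem_insert_of_mem hi)))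

/-- splitting a sum in the `v`-slot. -/
lemma GK_sum_left {ι : Type*} (w : Fin (n + 1) → A) (s : Finset ι) (z : ι → Fin (n + 1) → A)
    (horth : ∀ i ∈ s, w ⬝ᵥ z i = 0) (hg : ∀ i ∈ s, GK K (1 + vecMulVec (z i) w)) :
    GK K (1 + vecMulVec (∑ i ∈ s, z i) w) := by
  classical
  induction s using Finset.induction_on with
  | empty =>
    have h0 : vecMulVec (0 : Fin (n+1) → A) w = 0 := by ext p r; simp [vecMulVec_apply]
    simpa [h0] using (GK_one : GK K _)
  | insert a t hnotmem ih =>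
    have hsum : w ⬝ᵥ (∑ i ∈ t, z i) = 0 := by
      rw [dot_sum]
      exact Finset.sum_eq_zero fun i hi => horth i (Finset.mem_insert_of_mem hi)
    rw [Finset.sum_insert hnotmem, ← addVmul _ _ _ hsum]
    exact GK_mul (hg a (t.mem_insert_self a))
      (ih (fun i hi => horth i (Finset.mem_insert_of_mem hi))
          (fun i hi => hg i (Finset.mem_insert_of_mem hi)))

/-- Elementary matrices of level `I²` at arbitrary positions (including corners) are in `K`. -/
lemma GK_ecorn (hn : 3 ≤ n) (hKg : KGen I K) (i j : Fin (n + 1)) (hij : i ≠ j) :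
    ∀ s ∈ I * I, GK K (1 + Matrix.single i j s) := by
  intro s hs
  refine Submodule.mul_induction_on hs (fun a ha b hb => ?_) (fun x y hx hy => ?_)
  · obtain ⟨p, hpi, hpj, hc1, hc2, hc3, hc4⟩ := choose_p hn i j
    have e1 : vecMulVec (Pi.single i (1:A)) (Pi.single p a) = Matrix.single i p a := by
      rw [vv_single, one_mul]
    have e1' : vecMulVec (Pi.single i (1:A)) (-Pi.single p a) = Matrix.single i p (-a) := by
      rw [neg_single, vv_single, one_mul]
    have e2 : vecMulVec (Pi.single p (1:A)) (Pi.single j b) = Matrix.single p j b := by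
      rw [vv_single, one_mul]
    have e2' : vecMulVec (Pi.single p (1:A)) (-Pi.single j b) = Matrix.single p j (-b) := by
      rw [neg_single, vv_single, one_mul]
    have key := comm4 (Pi.single i (1 : A)) (Pi.single p a) (Pi.single p (1 : A))
      (Pi.single j b)
      (by rw [single_dotProduct, Pi.single_eq_of_ne hpi, mul_zero])
      (by rw [single_dotProduct, Pi.single_eq_of_ne (Ne.symm hpj), mul_zero])
      (by rw [single_dotProduct, Pi.single_eq_of_ne (Ne.symm hij), mul_zero])
    rw [single_dotProduct, Pi.single_eq_same, mul_one, e1, e2, e1', e2', vv_single, one_mul,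
      smul_single, smul_eq_mul] at key
    rw [← key]
    have g1 : GK K (1 + Matrix.single i p a) :=
      hKg i p a (Ne.symm hpi) (fun h => hc2 ⟨h.2, h.1⟩) (fun h => hc1 ⟨h.2, h.1⟩) ha
    have g2 : GK K (1 + Matrix.single p j b) := hKg p j b hpj hc3 hc4 hb
    have g3 : GK K (1 + Matrix.single i p (-a)) :=
      hKg i p (-a) (Ne.symm hpi) (fun h => hc2 ⟨h.2, h.1⟩) (fun h => hc1 ⟨h.2, h.1⟩)
        (neg_mem ha)
    have g4 : GK K (1 + Matrix.single p j (-b)) := hKg p j (-b) hpj hc3 hc4 (neg_mem hb)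
    exact GK_mul (GK_mul (GK_mul g1 g2) g3) g4
  · have e : (1 + Matrix.single i j x) * (1 + Matrix.single i j y)
        = 1 + Matrix.single i j (x + y) := by
      simpa [Matrix.transvection] using Matrix.transvection_mul_transvection_same i j hij x y
    rw [← e]; exact GK_mul hx hy

end Main2
section Main3
open Matrix

variable {n : ℕ} {A : Type*} [CommRing A] {I : Ideal A}
  {K : Subgroup (Matrix.SpecialLinearGroup (Fin (n + 1)) A)}

/-- The heart of the proof: `1 + v ⊗ (s·(vᵢ e_j - vⱼ e_i))` lies in `K` for `s ∈ I²`. -/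
lemma GK_main2 (hn : 3 ≤ n) (hKg : KGen I K) :
    ∀ s ∈ I * I, ∀ (v : Fin (n + 1) → A) (i j : Fin (n + 1)), i ≠ j →
      GK K (1 + vecMulVec v (Pi.single j (s * v i) + Pi.single i (-(s * v j)))) := by
  intro s hs
  refine Submodule.mul_induction_on hs (fun a ha b hb => ?_) (fun x y hx hy => ?_)
  swap
  · -- additivity in `s`
    intro v i j hij
    have hw : ∀ t : A, (Pi.single j (t * v i) + Pi.single i (-(t * v j))) ⬝ᵥ v = 0 := by
      intro t; rw [add_dotProduct, single_dotProduct, single_dotProduct]; ring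
    have hsum : (Pi.single j ((x + y) * v i) + Pi.single i (-((x + y) * v j)) : Fin (n+1) → A)
        = (Pi.single j (x * v i) + Pi.single i (-(x * v j)))
          + (Pi.single j (y * v i) + Pi.single i (-(y * v j))) := by
      funext k
      simp only [Pi.add_apply, Pi.single_apply]
      split_ifs <;> ring
    rw [hsum, ← addWmul _ _ _ (hw x)]
    exact GK_mul (hx v i j hij) (hy v i j hij)
  · -- base case `s = a * b`
    intro v i j hij
    obtain ⟨p, hpi, hpj, hc1, hc2, hc3, hc4⟩ := choose_p hn i j
    set wt : Fin (n + 1) → A := Pi.single j (a * b * v i) + Pi.single i (-(a * b * v j)) with hwt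
    set xh : Fin (n + 1) → A := Pi.single i (v i) + Pi.single j (v j) with hxh
    have hxhi : xh i = v i := by
      simp [hxh, Pi.single_eq_same, Pi.single_eq_of_ne hij]
    have hxhj : xh j = v j := by
      simp [hxh, Pi.single_eq_same, Pi.single_eq_of_ne (Ne.symm hij)]
    have hxhp : xh p = 0 := by
      simp [hxh, Pi.single_eq_of_ne hpi, Pi.single_eq_of_ne hpj]
    set z : Fin (n + 1) → A := v - xh with hz
    have hzi : z i = 0 := by simp [hz, hxhi]
    have hzj : z j = 0 := by simp [hz, hxhj]
    have hwtz : wt ⬝ᵥ z = 0 := by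
      rw [hwt, add_dotProduct, single_dotProduct, single_dotProduct, hzi, hzj]; ring
    have hxz : xh + z = v := by rw [hz]; abel
    have goal_eq : 1 + vecMulVec v wt = (1 + vecMulVec xh wt) * (1 + vecMulVec z wt) := by
      rw [addVmul _ _ _ hwtz, hxz]
    rw [goal_eq]
    refine GK_mul ?_ ?_
    · -- the xh part, via the commutator identity
      set wb : Fin (n + 1) → A := Pi.single j (b * v i) + Pi.single i (-(b * v j)) with hwb
      have hwbp : wb p = 0 := by
        simp [hwb, Pi.single_eq_of_ne hpj, Pi.single_eq_of_ne hpi]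
      have key := comm4 xh (Pi.single p a) (Pi.single p (1 : A)) wb
        (by rw [single_dotProduct, hxhp, mul_zero])
        (by rw [dotProduct_single, hwbp, zero_mul])
        (by rw [hwb, add_dotProduct, single_dotProduct, single_dotProduct, hxhi, hxhj]; ring)
      rw [single_dotProduct, Pi.single_eq_same, mul_one] at key
      have hab : a • wb = wt := by
        funext k
        simp only [hwb, hwt, Pi.add_apply, Pi.smul_apply, Pi.single_apply, smul_eq_mul]
        split_ifs <;> ring
      have hsm : a • vecMulVec xh wb = vecMulVec xh wt := by
        rw [← vv_smul_right, hab]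
      rw [hsm] at key
      rw [← key]
      -- now each of the four factors is in K
      have hF1 : GK K (1 + vecMulVec xh (Pi.single p a)) := by
        rw [hxh, ← addVmul (Pi.single i (v i)) (Pi.single j (v j)) (Pi.single p a) (by rw [single_dotProduct, Pi.single_eq_of_ne hpj, mul_zero]),
          vv_single, vv_single]
        exact GK_mul
          (hKg i p (v i * a) (Ne.symm hpi) (fun h => hc2 ⟨h.2, h.1⟩) (fun h => hc1 ⟨h.2, h.1⟩)
            (Ideal.mul_mem_left I (v i) ha))
          (hKg j p (v j * a) (Ne.symm hpj) (fun h => hc4 ⟨h.2, h.1⟩) (fun h => hc3 ⟨h.2, h.1⟩)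
            (Ideal.mul_mem_left I (v j) ha))
      have hF3 : GK K (1 + vecMulVec xh (-Pi.single p a)) := by
        rw [neg_single, hxh,
          ← addVmul (Pi.single i (v i)) (Pi.single j (v j)) (Pi.single p (-a)) (by rw [single_dotProduct, Pi.single_eq_of_ne hpj, mul_zero]),
          vv_single, vv_single]
        exact GK_mul
          (hKg i p (v i * -a) (Ne.symm hpi) (fun h => hc2 ⟨h.2, h.1⟩) (fun h => hc1 ⟨h.2, h.1⟩)
            (Ideal.mul_mem_left I (v i) (neg_mem ha)))
          (hKg j p (v j * -a) (Ne.symm hpj) (fun h => hc4 ⟨h.2, h.1⟩) (fun h => hc3 ⟨h.2, h.1⟩)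
            (Ideal.mul_mem_left I (v j) (neg_mem ha)))
      have hF2 : GK K (1 + vecMulVec (Pi.single p (1 : A)) wb) := by
        rw [hwb, ← addWmul _ _ _
          (by rw [single_dotProduct, Pi.single_eq_of_ne (Ne.symm hpj), mul_zero]),
          vv_single, vv_single, one_mul, one_mul]
        exact GK_mul
          (hKg p j (b * v i) hpj hc3 hc4 (Ideal.mul_mem_right (v i) I hb))
          (hKg p i (-(b * v j)) hpi hc1 hc2 (neg_mem (Ideal.mul_mem_right (v j) I hb)))
      have hF4 : GK K (1 + vecMulVec (Pi.single p (1 : A)) (-wb)) := by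
        have hnegwb : -wb = Pi.single j (-(b * v i)) + Pi.single i (b * v j) := by
          funext k
          simp only [hwb, Pi.neg_apply, Pi.add_apply, Pi.single_apply]
          split_ifs <;> ring
        rw [hnegwb, ← addWmul _ _ _
          (by rw [single_dotProduct, Pi.single_eq_of_ne (Ne.symm hpj), mul_zero]),
          vv_single, vv_single, one_mul, one_mul]
        exact GK_mul
          (hKg p j (-(b * v i)) hpj hc3 hc4 (neg_mem (Ideal.mul_mem_right (v i) I hb)))
          (hKg p i (b * v j) hpi hc1 hc2 (Ideal.mul_mem_right (v j) I hb))
      exact GK_mul (GK_mul (GK_mul hF1 hF2) hF3) hF4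
    · -- the z part: a product of elementary matrices of level I²
      have hzsum : z = ∑ r : Fin (n + 1), Pi.single r (z r) := (Finset.univ_sum_single z).symm
      rw [hzsum]
      refine GK_sum_left wt Finset.univ _ (fun r _ => ?_) (fun r _ => ?_)
      · rw [dotProduct_single]
        by_cases hri : r = i
        · subst hri; rw [hzi, mul_zero]
        by_cases hrj : r = j
        · subst hrj; rw [hzj, mul_zero]
        have : wt r = 0 := by
          simp [hwt, Pi.single_eq_of_ne hrj, Pi.single_eq_of_ne hri]
        rw [this, zero_mul]
      · by_cases hri : r = i
        · subst hri
          have : vecMulVec (Pi.single r (z r)) wt = 0 := by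
            rw [hzi]; ext u w; simp [vecMulVec_apply, Pi.single_apply]
          simpa [this] using (GK_one : GK K _)
        by_cases hrj : r = j
        · subst hrj
          have : vecMulVec (Pi.single r (z r)) wt = 0 := by
            rw [hzj]; ext u w; simp [vecMulVec_apply, Pi.single_apply]
          simpa [this] using (GK_one : GK K _)
        · rw [hwt, ← addWmul _ _ _
            (by rw [single_dotProduct, Pi.single_eq_of_ne (Ne.symm hrj), mul_zero]),
            vv_single, vv_single]
          refine GK_mul (GK_ecorn hn hKg r j hrj _ ?_) (GK_ecorn hn hKg r i hri _ ?_)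
          · exact Ideal.mul_mem_left _ (z r)
              (Ideal.mul_mem_right (v i) _ (Submodule.mul_mem_mul ha hb))
          · rw [mul_neg]
            exact neg_mem (Ideal.mul_mem_left _ (z r)
              (Ideal.mul_mem_right (v j) _ (Submodule.mul_mem_mul ha hb)))

end Main3
section Conj
open Matrix

variable {n : ℕ} {A : Type*} [CommRing A] {I : Ideal A}
  {K : Subgroup (Matrix.SpecialLinearGroup (Fin (n + 1)) A)}

lemma mul_vv (M : Matrix (Fin (n+1)) (Fin (n+1)) A) (a b : Fin (n+1) → A) :
    M * vecMulVec a b = vecMulVec (M *ᵥ a) b := by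
  ext p r
  simp only [mul_apply, vecMulVec_apply, mulVec, dotProduct, Finset.sum_mul]
  exact Finset.sum_congr rfl fun k _ => by ring

lemma vv_mul (a b : Fin (n+1) → A) (M : Matrix (Fin (n+1)) (Fin (n+1)) A) :
    vecMulVec a b * M = vecMulVec a (b ᵥ* M) := by
  ext p r
  simp only [mul_apply, vecMulVec_apply, vecMul, dotProduct, Finset.mul_sum]
  exact Finset.sum_congr rfl fun k _ => by ring

/-- decomposition of a vector orthogonal to a unimodular vector. -/
lemma dec_lemma (u v w : Fin (n + 1) → A) (huv : u ⬝ᵥ v = 1) (hwv : w ⬝ᵥ v = 0) :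
    w = ∑ kl : Fin (n + 1) × Fin (n + 1),
      (Pi.single kl.2 ((u kl.1 * w kl.2) * v kl.1)
        + Pi.single kl.1 (-((u kl.1 * w kl.2) * v kl.2))) := by
  simp only [dotProduct] at huv hwv
  funext r
  rw [Finset.sum_apply, Fintype.sum_prod_type]
  simp only [Pi.add_apply, Pi.single_apply]
  have second : ∀ k, (∑ l, if r = k then -(u k * w l * v l) else 0) = 0 := by
    intro k
    by_cases h : r = k
    · simp only [if_pos h]
      rw [show (∑ l, -(u k * w l * v l)) = -(u k * ∑ l, w l * v l) from by
        rw [Finset.mul_sum, ← Finset.sum_neg_distrib]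
        exact Finset.sum_congr rfl fun l _ => by ring, hwv, mul_zero, neg_zero]
    · simp only [if_neg h, Finset.sum_const_zero]
  simp only [Finset.sum_add_distrib, second, Finset.sum_const_zero, add_zero]
  simp only [Finset.sum_ite_eq, Finset.mem_univ, if_true]
  rw [show (∑ k, u k * w r * v k) = (∑ k, u k * v k) * w r from by
    rw [Finset.sum_mul]
    exact Finset.sum_congr rfl fun k _ => by ring, huv, one_mul]

end Conj
section ConjMain
open Matrix

variable {n : ℕ} {A : Type*} [CommRing A] {I : Ideal A}
  {K : Subgroup (Matrix.SpecialLinearGroup (Fin (n + 1)) A)}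

lemma GK_conj (hn : 3 ≤ n) (hKg : KGen I K) (g h : Matrix (Fin (n+1)) (Fin (n+1)) A)
    (hhg : h * g = 1) (i j : Fin (n+1)) (hij : i ≠ j) (q : A) (hq : q ∈ I * I) :
    GK K (g * (1 + Matrix.single i j q) * h) := by
  set v : Fin (n+1) → A := fun p => g p i * 1 with hv
  set w : Fin (n+1) → A := fun r => q * h j r with hw
  set u : Fin (n+1) → A := fun r => h i r with hu
  have hstd : Matrix.single i j q = vecMulVec (Pi.single i (1:A)) (Pi.single j q) := by
    rw [vv_single, one_mul]
  have hgh1 : g * h = 1 := by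
    -- h is a two-sided inverse of g since matrices over a commutative ring
    -- form a (finite-dimensional) situation where one-sided inverses are two-sided
    exact mul_eq_one_comm.mp hhg
  have hm : g * (1 + Matrix.single i j q) * h = 1 + vecMulVec v w := by
    rw [mul_add, mul_one, add_mul, hgh1, hstd, mul_vv, vv_mul, mulVec_single, single_vecMul]
    rfl
  have hhgji : (h * g) j i = 0 := by rw [hhg]; exact Matrix.one_apply_ne (Ne.symm hij)
  have hhgii : (h * g) i i = 1 := by rw [hhg]; exact Matrix.one_apply_eq i
  have hwv : w ⬝ᵥ v = 0 := by
    rw [show w ⬝ᵥ v = q * ((h * g) j i) from ?_, hhgji, mul_zero]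
    rw [mul_apply, Finset.mul_sum]
    simp only [dotProduct, hw, hv]
    exact Finset.sum_congr rfl fun k _ => by ring
  have huv : u ⬝ᵥ v = 1 := by
    rw [show u ⬝ᵥ v = (h * g) i i from ?_, hhgii]
    rw [mul_apply]
    simp only [dotProduct, hu, hv]
    exact Finset.sum_congr rfl fun k _ => by ring
  rw [hm, dec_lemma u v w huv hwv]
  refine GK_sum_right v Finset.univ _ (fun kl _ => ?_) (fun kl _ => ?_)
  · rw [add_dotProduct, single_dotProduct, single_dotProduct]; ring
  · obtain ⟨k, l⟩ := kl
    by_cases hkl : k = l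
    · subst hkl
      have hterm : (Pi.single k ((u k * w k) * v k) + Pi.single k (-((u k * w k) * v k))
          : Fin (n+1) → A) = 0 := by
        funext r
        simp only [Pi.add_apply, Pi.single_apply, Pi.zero_apply]
        split_ifs <;> ring
      rw [hterm, vv_zero_right]
      simpa using (GK_one : GK K _)
    · refine GK_main2 hn hKg (u k * w l) ?_ v k l hkl
      have : w l = q * h j l := rfl
      rw [this]
      exact Ideal.mul_mem_left _ (u k) (Ideal.mul_mem_right (h j l) _ hq)

end ConjMain
/-- The set of elementary matrices `e_{i,j}(a)` in `SL_N(A)` with `i ≠ j` and `a ∈ S`. -/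
def elemSet (N : ℕ) (A : Type*) [CommRing A] (S : Set A) :
    Set (Matrix.SpecialLinearGroup (Fin N) A) :=
  {x | ∃ (i j : Fin N) (a : A), i ≠ j ∧ a ∈ S ∧
        x.1 = 1 + Matrix.single i j a}

theorem stmt_8 (n : ℕ) (hn : 3 ≤ n) (A : Type*) [CommRing A] (I : Ideal A) :
    -- `E(n+1, A)`
    ∀ E : Subgroup (Matrix.SpecialLinearGroup (Fin (n + 1)) A),
      E = Subgroup.closure (elemSet (n + 1) A Set.univ) →
    -- `E(n+1, A; I²)`
    ∀ EI2 : Subgroup (Matrix.SpecialLinearGroup (Fin (n + 1)) A),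
      EI2 = Subgroup.closure (elemSet (n + 1) A (↑(I ^ 2) : Set A)) →
    -- `E^◁(n+1, A; I²)`, the normal subgroup of `E(n+1,A)` generated by `E(n+1,A;I²)`
    ∀ Enorm : Subgroup (Matrix.SpecialLinearGroup (Fin (n + 1)) A),
      Enorm = Subgroup.closure {y | ∃ g ∈ E, ∃ x ∈ EI2, y = g * x * g⁻¹} →
    -- `K(I)`, generated by the `e_{i,j}(a)`, `a ∈ I`, with `{i,j} ≠ {1, n+1}`
    ∀ K : Subgroup (Matrix.SpecialLinearGroup (Fin (n + 1)) A),
      K = Subgroup.closure {x | ∃ (i j : Fin (n + 1)) (a : A), i ≠ j ∧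
            ¬(i = 0 ∧ j = Fin.last n) ∧ ¬(i = Fin.last n ∧ j = 0) ∧ a ∈ I ∧
            x.1 = 1 + Matrix.single i j a} →
    Enorm ≤ K := by
  intro E hE EI2 hEI2 Enorm hEnorm K hK
  have hKg : KGen I K := by
    intro i j a hij h1 h2 ha
    refine ⟨⟨Matrix.transvection i j a, Matrix.det_transvection_of_ne i j hij a⟩, ?_, rfl⟩
    rw [hK]
    exact Subgroup.subset_closure ⟨i, j, a, hij, h1, h2, ha, rfl⟩
  rw [hEnorm]
  refine (Subgroup.closure_le K).mpr ?_
  rintro y ⟨g, hg, x, hx, rfl⟩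
  rw [hEI2] at hx
  show g * x * g⁻¹ ∈ K
  refine Subgroup.closure_induction (p := fun z _ => g * z * g⁻¹ ∈ K)
    (fun z hz => ?_) ?_ (fun z1 z2 _ _ h1 h2 => ?_) (fun z1 _ h1 => ?_) hx
  · obtain ⟨i, j, a, hij, haS, hzeq⟩ := hz
    have hq : a ∈ I * I := by
      have : a ∈ I ^ 2 := haS
      rwa [pow_two] at this
    have hhg : ((g⁻¹ : Matrix.SpecialLinearGroup (Fin (n+1)) A) : Matrix (Fin (n+1)) (Fin (n+1)) A)
        * (g : Matrix (Fin (n+1)) (Fin (n+1)) A) = 1 := by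
      rw [← Matrix.SpecialLinearGroup.coe_mul, inv_mul_cancel g,
        Matrix.SpecialLinearGroup.coe_one]
    obtain ⟨w, hwK, hw⟩ := GK_conj hn hKg (g : Matrix (Fin (n+1)) (Fin (n+1)) A)
      ((g⁻¹ : Matrix.SpecialLinearGroup (Fin (n+1)) A) : Matrix (Fin (n+1)) (Fin (n+1)) A)
      hhg i j hij a hq
    have : g * z * g⁻¹ = w := by
      apply Subtype.ext
      rw [hw]
      show ((g * z * g⁻¹ : Matrix.SpecialLinearGroup (Fin (n+1)) A) :
        Matrix (Fin (n+1)) (Fin (n+1)) A) = _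
      rw [Matrix.SpecialLinearGroup.coe_mul, Matrix.SpecialLinearGroup.coe_mul, hzeq]
    rw [this]
    exact hwK
  · simpa using one_mem K
  · show g * (z1 * z2) * g⁻¹ ∈ K
    have e : g * (z1 * z2) * g⁻¹ = (g * z1 * g⁻¹) * (g * z2 * g⁻¹) := by group
    rw [e]; exact mul_mem h1 h2
  · show g * z1⁻¹ * g⁻¹ ∈ K
    have e : g * z1⁻¹ * g⁻¹ = (g * z1 * g⁻¹)⁻¹ := by group
    rw [e]; exact inv_mem h1
end

section
/- Let n ≥ 2 and let q be a positive integer. Any two matrices g, h ∈ U_n(ℤ;q) satisfying g_{i,i+1} = h_{i,i+1} = q for all 1 ≤ i ≤ n−1 are conjugate in SL_n(ℤ). -/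
/-- `U_n(ℤ;q)`: unipotent upper-triangular integer matrices of determinant 1 whose
off-diagonal entries are divisible by `q`. -/
def Un (n : ℕ) (q : ℤ) : Set (Matrix.SpecialLinearGroup (Fin n) ℤ) :=
  {g | (∀ i, g.1 i i = 1) ∧ (∀ i j : Fin n, j < i → g.1 i j = 0) ∧
       (∀ i j : Fin n, i < j → q ∣ g.1 i j)}

/-- `L_n(ℤ;q)`: unipotent lower-triangular integer matrices of determinant 1 whose
off-diagonal entries are divisible by `q`. -/
def Ln (n : ℕ) (q : ℤ) : Set (Matrix.SpecialLinearGroup (Fin n) ℤ) :=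
  {g | (∀ i, g.1 i i = 1) ∧ (∀ i j : Fin n, i < j → g.1 i j = 0) ∧
       (∀ i j : Fin n, j < i → q ∣ g.1 i j)}

/-- `(U_n(ℤ;q) L_n(ℤ;q))^C = { u_1 l_1 ⋯ u_C l_C : u_i ∈ U_n(ℤ;q) ∪ {1}, l_i ∈ L_n(ℤ;q) ∪ {1} }`. -/
def ULpow (n : ℕ) (q : ℤ) (C : ℕ) : Set (Matrix.SpecialLinearGroup (Fin n) ℤ) :=
  {x | ∃ u l : Fin C → Matrix.SpecialLinearGroup (Fin n) ℤ,
    (∀ i, u i ∈ Un n q ∪ {1}) ∧ (∀ i, l i ∈ Ln n q ∪ {1}) ∧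
    (List.ofFn (fun i => u i * l i)).prod = x}

namespace Stmt10Aux

/-- The nilpotent Jordan matrix with 1's on the superdiagonal. -/
def Jm (n : ℕ) : Matrix (Fin n) (Fin n) ℤ :=
  Matrix.of fun i j => if (j : ℕ) = (i : ℕ) + 1 then 1 else 0

lemma pow_entry {n : ℕ} (A : Matrix (Fin n) (Fin n) ℤ)
    (h0 : ∀ i j : Fin n, (j : ℕ) ≤ (i : ℕ) → A i j = 0)
    (h1 : ∀ i j : Fin n, (j : ℕ) = (i : ℕ) + 1 → A i j = 1) :
    ∀ k, ∀ i j : Fin n,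
      ((j : ℕ) < (i : ℕ) + k → (A ^ k) i j = 0) ∧
      ((j : ℕ) = (i : ℕ) + k → (A ^ k) i j = 1) := by
  intro k
  induction k with
  | zero =>
    intro i j
    constructor
    · intro hj
      rw [pow_zero, Matrix.one_apply, if_neg]
      intro h; subst h; omega
    · intro hj
      have hij : i = j := Fin.ext (by omega)
      rw [pow_zero, Matrix.one_apply, if_pos hij]
  | succ k ih =>
    intro i j
    have hmul : (A ^ (k + 1)) i j = ∑ m, (A ^ k) i m * A m j := by
      rw [pow_succ, Matrix.mul_apply]
    constructor
    · intro hj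
      rw [hmul]
      apply Finset.sum_eq_zero
      intro m _
      by_cases hm : (m : ℕ) < (i : ℕ) + k
      · rw [(ih i m).1 hm, zero_mul]
      · rw [h0 m j (by omega), mul_zero]
    · intro hj
      have hik : (i : ℕ) + k < n := by omega
      rw [hmul, Finset.sum_eq_single (⟨(i : ℕ) + k, hik⟩ : Fin n)]
      · rw [(ih i _).2 (by simp), h1 _ j (by show (j : ℕ) = (i : ℕ) + k + 1; omega), one_mul]
      · intro m _ hm
        by_cases hm' : (m : ℕ) < (i : ℕ) + k
        · rw [(ih i m).1 hm', zero_mul]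
        · have hne : (m : ℕ) ≠ (i : ℕ) + k := fun h => hm (Fin.ext h)
          rw [h0 m j (by omega), mul_zero]
      · intro hmem; exact absurd (Finset.mem_univ _) hmem

lemma conj_to_std {n : ℕ} (hn : 0 < n) (q : ℤ) (hq : 0 < q)
    (g : Matrix.SpecialLinearGroup (Fin n) ℤ)
    (hdiag : ∀ i, g.1 i i = 1) (hlow : ∀ i j : Fin n, j < i → g.1 i j = 0)
    (hdvd : ∀ i j : Fin n, i < j → q ∣ g.1 i j)
    (hsup : ∀ i : Fin n, ∀ hi : (i : ℕ) + 1 < n, g.1 i ⟨(i : ℕ) + 1, hi⟩ = q) :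
    ∃ C : Matrix (Fin n) (Fin n) ℤ, C.det = 1 ∧
      g.1 * C = C * (1 + q • Jm n) := by
  set A : Matrix (Fin n) (Fin n) ℤ :=
    Matrix.of (fun i j => if (i : ℕ) < (j : ℕ) then g.1 i j / q else 0) with hAdef
  have h0 : ∀ i j : Fin n, (j : ℕ) ≤ (i : ℕ) → A i j = 0 := by
    intro i j hji
    simp only [hAdef, Matrix.of_apply]
    rw [if_neg (by omega)]
  have h1 : ∀ i j : Fin n, (j : ℕ) = (i : ℕ) + 1 → A i j = 1 := by
    intro i j hj
    have hj' : (i : ℕ) + 1 < n := hj ▸ j.isLt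
    have : j = ⟨(i : ℕ) + 1, hj'⟩ := Fin.ext hj
    subst this
    simp only [hAdef, Matrix.of_apply]
    rw [if_pos (by omega), hsup i hj', Int.ediv_self (by omega)]
  have hA : g.1 = 1 + q • A := by
    ext i j
    rcases lt_trichotomy ((i : ℕ)) ((j : ℕ)) with hij | hij | hij
    · have : ¬ i = j := fun h => by subst h; omega
      simp only [Matrix.add_apply, Matrix.smul_apply, Matrix.one_apply, if_neg this,
        hAdef, Matrix.of_apply, if_pos hij, smul_eq_mul]
      rw [Int.mul_ediv_cancel' (hdvd i j (by exact hij)), zero_add]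
    · have hij' : i = j := Fin.ext hij
      subst hij'
      simp only [Matrix.add_apply, Matrix.smul_apply, Matrix.one_apply_eq,
        hAdef, Matrix.of_apply, if_neg (lt_irrefl _), smul_eq_mul, mul_zero, add_zero]
      exact hdiag i
    · have : ¬ i = j := fun h => by subst h; omega
      simp only [Matrix.add_apply, Matrix.smul_apply, Matrix.one_apply, if_neg this,
        hAdef, Matrix.of_apply, if_neg (by omega : ¬ (i : ℕ) < (j : ℕ)), smul_eq_mul,
        mul_zero, add_zero]
      exact hlow i j (by exact hij)
  have P := pow_entry A h0 h1
  set e : Fin n := ⟨n - 1, by omega⟩ with he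
  have he' : (e : ℕ) = n - 1 := rfl
  set C : Matrix (Fin n) (Fin n) ℤ :=
    Matrix.of (fun i j => (A ^ (n - 1 - (j : ℕ))) i e) with hCdef
  have hCut : C.BlockTriangular id := by
    intro i j hij
    simp only [id] at hij
    have hji : (j : ℕ) < (i : ℕ) := hij
    simp only [hCdef, Matrix.of_apply]
    exact (P (n - 1 - (j : ℕ)) i e).1 (by rw [he']; omega)
  have hCdiag : ∀ i, C i i = 1 := by
    intro i
    simp only [hCdef, Matrix.of_apply]
    exact (P (n - 1 - (i : ℕ)) i e).2 (by rw [he']; omega)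
  have hdet : C.det = 1 := by
    rw [Matrix.det_of_upperTriangular hCut]
    simp [hCdiag]
  refine ⟨C, hdet, ?_⟩
  have hACJ : A * C = C * Jm n := by
    ext i j
    have hL : (A * C) i j = (A ^ (n - (j : ℕ))) i e := by
      rw [Matrix.mul_apply]
      have : ∑ m, A i m * C m j = (A * A ^ (n - 1 - (j : ℕ))) i e := by
        rw [Matrix.mul_apply]
        apply Finset.sum_congr rfl
        intro m _
        simp [hCdef]
      rw [this, ← pow_succ']
      have hexp : n - 1 - (j : ℕ) + 1 = n - (j : ℕ) := by omega
      rw [hexp]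
    rw [hL]
    rcases Nat.eq_zero_or_pos ((j : ℕ)) with hj0 | hjpos
    · have hR : (C * Jm n) i j = 0 := by
        rw [Matrix.mul_apply]
        apply Finset.sum_eq_zero
        intro m _
        have : Jm n m j = 0 := by
          simp only [Jm, Matrix.of_apply]
          rw [if_neg (by omega)]
        rw [this, mul_zero]
      rw [hR]
      exact (P (n - (j : ℕ)) i e).1 (by rw [he']; omega)
    · have hjlt : (j : ℕ) - 1 < n := by omega
      have hR : (C * Jm n) i j = C i ⟨(j : ℕ) - 1, hjlt⟩ := by
        rw [Matrix.mul_apply, Finset.sum_eq_single (⟨(j : ℕ) - 1, hjlt⟩ : Fin n)]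
        · have : Jm n (⟨(j : ℕ) - 1, hjlt⟩ : Fin n) j = 1 := by
            simp only [Jm, Matrix.of_apply]
            exact if_pos (show (j : ℕ) = (j : ℕ) - 1 + 1 by omega)
          rw [this, mul_one]
        · intro m _ hm
          have hne : (m : ℕ) ≠ (j : ℕ) - 1 := fun h => hm (Fin.ext h)
          have : Jm n m j = 0 := by
            simp only [Jm, Matrix.of_apply]
            rw [if_neg (by omega)]
          rw [this, mul_zero]
        · intro hmem; exact absurd (Finset.mem_univ _) hmem
      rw [hR]
      simp only [hCdef, Matrix.of_apply]
      have hexp : n - 1 - ((j : ℕ) - 1) = n - (j : ℕ) := by omega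
      rw [hexp]
  rw [hA, Matrix.add_mul, Matrix.one_mul, Matrix.smul_mul, hACJ,
    Matrix.mul_add, Matrix.mul_one, Matrix.mul_smul]

end Stmt10Aux

theorem stmt_10 (n : ℕ) (hn : 2 ≤ n) (q : ℕ) (hq : 0 < q)
    (g h : Matrix.SpecialLinearGroup (Fin n) ℤ)
    (hg : g ∈ Un n q) (hh : h ∈ Un n q)
    (hg' : ∀ i : Fin n, ∀ hi : (i : ℕ) + 1 < n, g.1 i ⟨(i : ℕ) + 1, hi⟩ = q)
    (hh' : ∀ i : Fin n, ∀ hi : (i : ℕ) + 1 < n, h.1 i ⟨(i : ℕ) + 1, hi⟩ = q) :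
    ∃ c : Matrix.SpecialLinearGroup (Fin n) ℤ, c * g * c⁻¹ = h := by
  obtain ⟨hgd, hgl, hgu⟩ := hg
  obtain ⟨hhd, hhl, hhu⟩ := hh
  have hn0 : 0 < n := by omega
  have hq' : (0 : ℤ) < (q : ℤ) := by exact_mod_cast hq
  obtain ⟨Cg, hCgdet, hCg⟩ := Stmt10Aux.conj_to_std hn0 (q : ℤ) hq' g hgd hgl hgu hg'
  obtain ⟨Ch, hChdet, hCh⟩ := Stmt10Aux.conj_to_std hn0 (q : ℤ) hq' h hhd hhl hhu hh'
  set Cg' : Matrix.SpecialLinearGroup (Fin n) ℤ := ⟨Cg, hCgdet⟩ with hCg'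
  set Ch' : Matrix.SpecialLinearGroup (Fin n) ℤ := ⟨Ch, hChdet⟩ with hCh'
  have hinvg : (Cg'⁻¹ : Matrix.SpecialLinearGroup (Fin n) ℤ).1 * Cg = 1 := by
    have := inv_mul_cancel Cg'
    calc (Cg'⁻¹).1 * Cg = ((Cg'⁻¹ * Cg' : Matrix.SpecialLinearGroup (Fin n) ℤ) : Matrix (Fin n) (Fin n) ℤ) := rfl
    _ = 1 := by rw [this]; rfl
  have hinvh : (Ch'⁻¹ : Matrix.SpecialLinearGroup (Fin n) ℤ).1 * Ch = 1 := by
    have := inv_mul_cancel Ch'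
    calc (Ch'⁻¹).1 * Ch = ((Ch'⁻¹ * Ch' : Matrix.SpecialLinearGroup (Fin n) ℤ) : Matrix (Fin n) (Fin n) ℤ) := rfl
    _ = 1 := by rw [this]; rfl
  have key : Cg'⁻¹ * g * Cg' = Ch'⁻¹ * h * Ch' := by
    apply Subtype.ext
    show (Cg'⁻¹).1 * g.1 * Cg = (Ch'⁻¹).1 * h.1 * Ch
    rw [mul_assoc, hCg, ← mul_assoc, hinvg, one_mul,
        mul_assoc, hCh, ← mul_assoc, hinvh, one_mul]
  refine ⟨Ch' * Cg'⁻¹, ?_⟩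
  have : (Ch' * Cg'⁻¹) * g * (Ch' * Cg'⁻¹)⁻¹ = Ch' * (Cg'⁻¹ * g * Cg') * Ch'⁻¹ := by
    group
  rw [this, key]
  group
end

section
/- Let p be a prime, n, m ≥ 1, k ≥ 0 integers, and let f = (f_1, …, f_m) where each f_i is a polynomial in n variables with coefficients in ℤ_p such that: (i) f_i(0) = 0 for all i; (ii) every coefficient of every f_i is divisible by p^k; (iii) the image of ℤ_p^n under the Jacobian linear map df(0) = (∂f_i/∂x_j(0)) contains p^k ℤ_p^m. Then f(ℤ_p^n) contains p^{k+1} ℤ_p^m, i.e. every b ∈ ℤ_p^m all of whose coordinates are divisible by p^{k+1} is of the form f(a) for some a ∈ ℤ_p^n. -/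
open MvPolynomial

theorem aux_congr {R : Type*} [CommRing R] {n : ℕ} (c : R) (a b : Fin n → R)
    (hab : ∀ j, c ∣ a j - b j) (g : MvPolynomial (Fin n) R) :
    c ∣ eval a g - eval b g := by
  induction g using MvPolynomial.induction_on with
  | C r => simp
  | add q r hq hr =>
    have := dvd_add hq hr
    simpa [mul_comm, add_sub_add_comm] using this
  | mul_X q i hq =>
    have : eval a (q * X i) - eval b (q * X i)
        = (eval a q - eval b q) * a i + eval b q * (a i - b i) := by
      simp [eval_mul]; ring
    rw [this]
    exact dvd_add (hq.mul_right _) ((hab i).mul_left _)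

theorem aux_taylor {R : Type*} [CommRing R] {n : ℕ} (c : R) (a h : Fin n → R)
    (hh : ∀ j, c ∣ h j) (g : MvPolynomial (Fin n) R) :
    c ^ 2 ∣ eval (a + h) g - eval a g - ∑ j, eval a (pderiv j g) * h j := by
  induction g using MvPolynomial.induction_on with
  | C r => simp
  | add q r hq hr =>
    have := dvd_add hq hr
    have e : eval (a + h) (q + r) - eval a (q + r) - ∑ j, eval a (pderiv j (q + r)) * h j
        = (eval (a + h) q - eval a q - ∑ j, eval a (pderiv j q) * h j)
          + (eval (a + h) r - eval a r - ∑ j, eval a (pderiv j r) * h j) := by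
      simp [Finset.sum_add_distrib, add_mul]; ring
    rw [e]; exact this
  | mul_X q i hq =>
    have e : eval (a + h) (q * X i) - eval a (q * X i) - ∑ j, eval a (pderiv j (q * X i)) * h j
        = (eval (a + h) q - eval a q - ∑ j, eval a (pderiv j q) * h j) * a i
          + (eval (a + h) q - eval a q) * h i := by
      have h1 : ∑ j, eval a (pderiv j (q * X i)) * h j
          = (∑ j, eval a (pderiv j q) * h j) * a i + eval a q * h i := by
        have hs : ∀ j ∈ Finset.univ, eval a (pderiv j (q * X i)) * h j
            = eval a (pderiv j q) * h j * a i + (if j = i then eval a q * h j else 0) := by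
          intro j _
          rw [pderiv_mul, pderiv_X]
          by_cases hji : j = i <;> simp [hji, Pi.single_apply] <;> ring
        rw [Finset.sum_congr rfl hs, Finset.sum_add_distrib, Finset.sum_mul]
        congr 1
        simp
      rw [h1, eval_mul, eval_mul, eval_X, eval_X, Pi.add_apply]
      ring
    rw [e]
    refine dvd_add (hq.mul_right _) ?_
    have h1 : c ∣ eval (a + h) q - eval a q :=
      aux_congr c (a + h) a (fun j => by simpa using hh j) q
    have : c * c ∣ (eval (a + h) q - eval a q) * h i := mul_dvd_mul h1 (hh i)
    simpa [sq] using this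

theorem stmt_11 (p : ℕ) [Fact p.Prime] (n m : ℕ) (hn : 1 ≤ n) (hm : 1 ≤ m) (k : ℕ)
    (f : Fin m → MvPolynomial (Fin n) ℤ_[p])
    -- (i) `f_i(0) = 0`
    (h0 : ∀ i, MvPolynomial.eval (0 : Fin n → ℤ_[p]) (f i) = 0)
    -- (ii) every coefficient of every `f_i` is divisible by `p^k`
    (hcoeff : ∀ (i : Fin m) (d : (Fin n) →₀ ℕ), (p : ℤ_[p]) ^ k ∣ MvPolynomial.coeff d (f i))
    -- (iii) the image of the Jacobian `df(0)` contains `p^k ℤ_p^m`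
    (hjac : ∀ b : Fin m → ℤ_[p], ∃ v : Fin n → ℤ_[p], ∀ i,
      ∑ j, MvPolynomial.eval (0 : Fin n → ℤ_[p]) (MvPolynomial.pderiv j (f i)) * v j
        = (p : ℤ_[p]) ^ k * b i) :
    ∀ b : Fin m → ℤ_[p], (∀ i, (p : ℤ_[p]) ^ (k + 1) ∣ b i) →
      ∃ a : Fin n → ℤ_[p], ∀ i, MvPolynomial.eval a (f i) = b i := by
  intro b hb
  have hp : p.Prime := Fact.out
  -- extract `p^k` from the coefficients: `f i = C (p^k) * g i`
  choose g hg using fun i => (C_dvd_iff_dvd_coeff ((p : ℤ_[p]) ^ k) (f i)).2 (hcoeff i)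
  -- the invariant
  have base : (∀ j, (p : ℤ_[p]) ∣ (0 : Fin n → ℤ_[p]) j) ∧
      ∀ i, (p : ℤ_[p]) ^ (k + 1 + 0) ∣ b i - eval (0 : Fin n → ℤ_[p]) (f i) := by
    refine ⟨fun j => dvd_zero _, fun i => ?_⟩
    rw [h0 i, sub_zero]
    simpa using hb i
  -- Newton step
  have step : ∀ s (a : Fin n → ℤ_[p]),
      ((∀ j, (p : ℤ_[p]) ∣ a j) ∧ ∀ i, (p : ℤ_[p]) ^ (k + 1 + s) ∣ b i - eval a (f i)) →
      ∃ a', ((∀ j, (p : ℤ_[p]) ∣ a' j) ∧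
          ∀ i, (p : ℤ_[p]) ^ (k + 1 + (s + 1)) ∣ b i - eval a' (f i)) ∧
        ∀ j, (p : ℤ_[p]) ^ (s + 1) ∣ a' j - a j := by
    intro s a ha
    obtain ⟨ha1, ha2⟩ := ha
    choose c hc using fun i => (ha2 i)
    obtain ⟨v, hv⟩ := hjac c
    refine ⟨a + fun j => (p : ℤ_[p]) ^ (s + 1) * v j, ⟨?_, ?_⟩, ?_⟩
    · intro j
      exact dvd_add (ha1 j)
        ((dvd_pow_self (p : ℤ_[p]) (Nat.succ_ne_zero s)).mul_right _)
    · intro i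
      set h : Fin n → ℤ_[p] := fun j => (p : ℤ_[p]) ^ (s + 1) * v j with hhdef
      -- Taylor error term
      have htay : (p : ℤ_[p]) ^ (k + (s + 1) * 2) ∣
          eval (a + h) (f i) - eval a (f i) - ∑ j, eval a (pderiv j (f i)) * h j := by
        have h2 : eval (a + h) (f i) - eval a (f i) - ∑ j, eval a (pderiv j (f i)) * h j
            = (p : ℤ_[p]) ^ k *
              (eval (a + h) (g i) - eval a (g i) - ∑ j, eval a (pderiv j (g i)) * h j) := by
          have e1 : ∀ j, eval a (pderiv j (f i)) * h j
              = (p : ℤ_[p]) ^ k * (eval a (pderiv j (g i)) * h j) := by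
            intro j
            rw [hg i, pderiv_mul, pderiv_C]
            simp [eval_mul]
            ring
          rw [Finset.sum_congr rfl fun j _ => e1 j, ← Finset.mul_sum, hg i]
          simp [eval_mul]
          ring
        rw [h2, pow_add, pow_mul]
        exact mul_dvd_mul_left _ (aux_taylor _ a h (fun j => Dvd.intro _ rfl) (g i))
      -- the linear term: exact part + error part
      have hlin : ∑ j, eval a (pderiv j (f i)) * h j
          = (p : ℤ_[p]) ^ (k + 1 + s) * c i
            + ∑ j, (eval a (pderiv j (f i)) - eval (0 : Fin n → ℤ_[p]) (pderiv j (f i))) * h j := by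
        have e0 : ∑ j, eval (0 : Fin n → ℤ_[p]) (pderiv j (f i)) * h j
            = (p : ℤ_[p]) ^ (s + 1) * ∑ j, eval (0 : Fin n → ℤ_[p]) (pderiv j (f i)) * v j := by
          rw [Finset.mul_sum]
          exact Finset.sum_congr rfl fun j _ => by rw [hhdef]; ring
        have e2 : (p : ℤ_[p]) ^ (s + 1) * ((p : ℤ_[p]) ^ k * c i)
            = (p : ℤ_[p]) ^ (k + 1 + s) * c i := by
          rw [← mul_assoc, ← pow_add, show s + 1 + k = k + 1 + s from by omega]
        have split : (∑ j, eval a (pderiv j (f i)) * h j) =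
            (∑ j, eval (0 : Fin n → ℤ_[p]) (pderiv j (f i)) * h j)
              + ∑ j, (eval a (pderiv j (f i)) - eval (0 : Fin n → ℤ_[p]) (pderiv j (f i))) * h j := by
          rw [← Finset.sum_add_distrib]
          exact Finset.sum_congr rfl fun j _ => by ring
        rw [split, e0, hv i, e2]
      -- key identity
      have key : b i - eval (a + h) (f i)
          = -(eval (a + h) (f i) - eval a (f i) - ∑ j, eval a (pderiv j (f i)) * h j)
            - ∑ j, (eval a (pderiv j (f i)) - eval (0 : Fin n → ℤ_[p]) (pderiv j (f i))) * h j := by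
        linear_combination hc i - hlin
      show (p : ℤ_[p]) ^ (k + 1 + (s + 1)) ∣ b i - eval (a + h) (f i)
      rw [key]
      refine dvd_sub (dvd_neg.2 ((pow_dvd_pow _ (by omega)).trans htay)) (Finset.dvd_sum ?_)
      intro j _
      have d1 : (p : ℤ_[p]) ^ (k + 1) ∣
          eval a (pderiv j (f i)) - eval (0 : Fin n → ℤ_[p]) (pderiv j (f i)) := by
        have e1 : eval a (pderiv j (f i)) - eval (0 : Fin n → ℤ_[p]) (pderiv j (f i))
            = (p : ℤ_[p]) ^ k *
              (eval a (pderiv j (g i)) - eval (0 : Fin n → ℤ_[p]) (pderiv j (g i))) := by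
          rw [hg i, pderiv_mul, pderiv_C]
          simp [eval_mul]
          ring
        rw [e1, pow_succ]
        exact mul_dvd_mul_left _ (aux_congr (p : ℤ_[p]) a 0 (fun j => by simpa using ha1 j) _)
      have d2 : (p : ℤ_[p]) ^ (s + 1) ∣ h j := Dvd.intro _ rfl
      have := mul_dvd_mul d1 d2
      rwa [← pow_add, show k + 1 + (s + 1) = k + 1 + (s + 1) from rfl] at this
    · intro j
      simp only [Pi.add_apply, add_sub_cancel_left]
      exact Dvd.intro _ rfl
  -- build the sequence
  let F : (s : ℕ) → {a : Fin n → ℤ_[p] //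
      (∀ j, (p : ℤ_[p]) ∣ a j) ∧ ∀ i, (p : ℤ_[p]) ^ (k + 1 + s) ∣ b i - eval a (f i)} :=
    fun s => Nat.rec ⟨0, base⟩
      (fun s ih => ⟨(step s ih.1 ih.2).choose, (step s ih.1 ih.2).choose_spec.1⟩) s
  have hFstep : ∀ s j, (p : ℤ_[p]) ^ (s + 1) ∣ (F (s + 1)).1 j - (F s).1 j :=
    fun s => (step s (F s).1 (F s).2).choose_spec.2
  -- telescoping
  have hFchain : ∀ s t, s ≤ t → ∀ j, (p : ℤ_[p]) ^ (s + 1) ∣ (F t).1 j - (F s).1 j := by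
    intro s t hst
    induction t, hst using Nat.le_induction with
    | base => intro j; simp
    | succ t hst ih =>
      intro j
      have h1 := (pow_dvd_pow (p : ℤ_[p]) (by omega : s + 1 ≤ t + 1)).trans (hFstep t j)
      have := dvd_add h1 (ih j)
      simpa using this
  -- norm facts
  have dvd_norm : ∀ (x : ℤ_[p]) (t : ℕ), (p : ℤ_[p]) ^ t ∣ x → ‖x‖ ≤ (p : ℝ) ^ (-(t : ℤ)) :=
    fun x t hx => (PadicInt.norm_le_pow_iff_mem_span_pow x t).2
      (Ideal.mem_span_singleton.2 hx)
  have hp1 : (1 : ℝ) < (p : ℝ) := by exact_mod_cast hp.one_lt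
  have hp0 : (0 : ℝ) < (p : ℝ) := by positivity
  have hinvlt : (p : ℝ)⁻¹ < 1 := inv_lt_one_of_one_lt₀ hp1
  have hinv0 : (0 : ℝ) ≤ (p : ℝ)⁻¹ := by positivity
  have hpow : ∀ t : ℕ, (p : ℝ) ^ (-(t : ℤ)) = ((p : ℝ)⁻¹) ^ t := by
    intro t
    rw [zpow_neg, zpow_natCast, inv_pow]
  -- convergence, coordinatewise
  have hcauchy : ∀ j, CauchySeq (fun s => (F s).1 j) := by
    intro j
    refine cauchySeq_of_le_geometric ((p : ℝ)⁻¹) 1 hinvlt fun s => ?_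
    rw [dist_eq_norm, norm_sub_rev]
    calc ‖(F (s + 1)).1 j - (F s).1 j‖ ≤ (p : ℝ) ^ (-(((s : ℕ) + 1) : ℤ)) := by
          exact_mod_cast dvd_norm _ (s + 1) (hFstep s j)
      _ = ((p : ℝ)⁻¹) ^ (s + 1) := by exact_mod_cast hpow (s + 1)
      _ ≤ ((p : ℝ)⁻¹) ^ s := pow_le_pow_of_le_one hinv0 hinvlt.le (Nat.le_succ s)
      _ = 1 * ((p : ℝ)⁻¹) ^ s := (one_mul _).symm
  choose a ha using fun j => cauchySeq_tendsto_of_complete (hcauchy j)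
  -- the limit is close to each F s
  have hclose : ∀ s j, (p : ℤ_[p]) ^ (s + 1) ∣ a j - (F s).1 j := by
    intro s j
    rw [← Ideal.mem_span_singleton, ← PadicInt.norm_le_pow_iff_mem_span_pow]
    have hnorm : Filter.Tendsto (fun t => ‖(F t).1 j - (F s).1 j‖) Filter.atTop
        (nhds ‖a j - (F s).1 j‖) := ((ha j).sub tendsto_const_nhds).norm
    refine le_of_tendsto hnorm ?_
    filter_upwards [Filter.eventually_ge_atTop s] with t ht
    exact dvd_norm _ _ (hFchain s t ht j)
  refine ⟨a, fun i => ?_⟩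
  have hdvd : ∀ s : ℕ, (p : ℤ_[p]) ^ (s + 1) ∣ b i - eval a (f i) := by
    intro s
    have h1 : (p : ℤ_[p]) ^ (s + 1) ∣ b i - eval (F s).1 (f i) :=
      (pow_dvd_pow _ (by omega : s + 1 ≤ k + 1 + s)).trans ((F s).2.2 i)
    have h2 : (p : ℤ_[p]) ^ (s + 1) ∣ eval (F s).1 (f i) - eval a (f i) :=
      aux_congr _ _ _ (fun j => by
        have := (hclose s j).neg_right
        simpa [neg_sub] using this) (f i)
    have := dvd_add h1 h2
    simpa using this
  have hnorm2 : ∀ s : ℕ, ‖b i - eval a (f i)‖ ≤ ((p : ℝ)⁻¹) ^ (s + 1) := by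
    intro s
    have := dvd_norm _ _ (hdvd s)
    rwa [hpow] at this
  have htends : Filter.Tendsto (fun s : ℕ => ((p : ℝ)⁻¹) ^ (s + 1)) Filter.atTop (nhds 0) :=
    (tendsto_pow_atTop_nhds_zero_of_lt_one hinv0 hinvlt).comp (Filter.tendsto_add_atTop_nat 1)
  have hle0 : ‖b i - eval a (f i)‖ ≤ 0 := ge_of_tendsto' htends hnorm2
  have hzero : b i - eval a (f i) = 0 :=
    norm_eq_zero.1 (le_antisymm hle0 (norm_nonneg _))
  exact (sub_eq_zero.1 hzero).symm
end

section
/- Let n ≥ 3, let F be a finite field, and let a, b ∈ SL_n(F) be elements that generate SL_n(F). Then the linear map sl_n(F) × sl_n(F) → sl_n(F) given by (X, Y) ↦ b⁻¹(X − a⁻¹Xa)b + (Y − b⁻¹Yb) is surjective; that is, for every trace-zero matrix Z ∈ sl_n(F) there exist trace-zero matrices X, Y with b⁻¹(X − a⁻¹Xa)b + (Y − b⁻¹Yb) = Z. -/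
open Matrix

section Aux

variable {n : ℕ} {F : Type*} [Field F]

private lemma trace_mul_std' (C : Matrix (Fin n) (Fin n) F) (i j : Fin n) :
    (C * single i j (1:F)).trace = C j i := by
  rw [Matrix.trace, Finset.sum_eq_single j]
  · simp
  · intro m _ hm; simp [hm]
  · simp

private lemma scalar_of_perp_sl (hn : 3 ≤ n) (C : Matrix (Fin n) (Fin n) F)
    (h : ∀ Y : Matrix (Fin n) (Fin n) F, Y.trace = 0 → (C * Y).trace = 0) :
    ∃ c : F, C = c • (1 : Matrix (Fin n) (Fin n) F) := by
  have h0 : 0 < n := by omega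
  refine ⟨C ⟨0, h0⟩ ⟨0, h0⟩, ?_⟩
  have offdiag : ∀ k l : Fin n, k ≠ l → C k l = 0 := by
    intro k l hkl
    have := h (single l k 1) (trace_single_eq_of_ne l k 1 hkl.symm)
    rwa [trace_mul_std'] at this
  have diag : ∀ k l : Fin n, C k k = C l l := by
    intro k l
    rcases eq_or_ne k l with rfl | hkl
    · rfl
    have ht : (single k k (1:F) - single l l 1).trace = 0 := by simp
    have := h _ ht
    rw [Matrix.mul_sub, Matrix.trace_sub, trace_mul_std', trace_mul_std'] at this
    exact sub_eq_zero.mp this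
  ext k l
  rcases eq_or_ne k l with rfl | hkl
  · simp [Matrix.one_apply, diag k ⟨0, h0⟩]
  · simp [Matrix.one_apply, hkl, offdiag k l hkl]

private def quasiComm (Z : Matrix (Fin n) (Fin n) F) :
    Subgroup (SpecialLinearGroup (Fin n) F) where
  carrier := {g | ∃ μ : F, g.1 * Z = Z * g.1 - μ • g.1}
  one_mem' := ⟨0, by simp⟩
  mul_mem' := by
    rintro g h ⟨μ, hμ⟩ ⟨ν, hν⟩
    refine ⟨μ + ν, ?_⟩
    have : (g * h).1 = g.1 * h.1 := rfl
    rw [this, mul_assoc, hν, Matrix.mul_sub, ← mul_assoc, hμ, Matrix.mul_smul,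
      Matrix.sub_mul, Matrix.smul_mul, mul_assoc]
    rw [add_smul]
    abel
  inv_mem' := by
    rintro g ⟨μ, hμ⟩
    refine ⟨-μ, ?_⟩
    have h1 : (g⁻¹).1 * g.1 = 1 := by
      have : ((g⁻¹ * g : SpecialLinearGroup (Fin n) F)).1 = (g⁻¹).1 * g.1 := rfl
      rw [← this, inv_mul_cancel]; rfl
    have h2 : g.1 * (g⁻¹).1 = 1 := by
      have : ((g * g⁻¹ : SpecialLinearGroup (Fin n) F)).1 = g.1 * (g⁻¹).1 := rfl
      rw [← this, mul_inv_cancel]; rfl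
    have key := congrArg (fun M => (g⁻¹).1 * M * (g⁻¹).1) hμ
    simp only [Matrix.mul_sub, Matrix.sub_mul, Matrix.mul_smul, Matrix.smul_mul] at key
    rw [← mul_assoc, ← mul_assoc, h1, one_mul] at key
    rw [mul_assoc (g⁻¹).1 Z, mul_assoc (g⁻¹).1 (Z * g.1), mul_assoc Z, h2, mul_one] at key
    rw [one_mul] at key
    rw [neg_smul, sub_neg_eq_add, key]
    abel

private lemma scalar_of_quasiComm_top (hn : 3 ≤ n) (Z : Matrix (Fin n) (Fin n) F)
    (h : quasiComm Z = ⊤) :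
    ∃ c : F, Z = c • (1 : Matrix (Fin n) (Fin n) F) := by
  have h0 : 0 < n := by omega
  have comm : ∀ i j : Fin n, i ≠ j →
      single i j (1:F) * Z = Z * single i j (1:F) := by
    intro i j hij
    set E := single i j (1:F) with hE
    have hdet : (Matrix.transvection i j (1:F)).det = 1 :=
      Matrix.det_transvection_of_ne i j hij 1
    let t : SpecialLinearGroup (Fin n) F := ⟨Matrix.transvection i j 1, hdet⟩
    have ht : t ∈ quasiComm Z := by rw [h]; exact Subgroup.mem_top _
    obtain ⟨μ, hμ⟩ := ht
    rw [show (t : Matrix (Fin n) (Fin n) F) = Matrix.transvection i j 1 from rfl] at hμ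
    simp only [Matrix.transvection] at hμ
    have key : E * Z = Z * E - μ • 1 - μ • E := by
      rw [Matrix.add_mul, Matrix.mul_add, one_mul, mul_one, smul_add, ← hE] at hμ
      have key0 := eq_sub_of_add_eq' hμ
      exact key0.trans (by abel)
    obtain ⟨k, hki, hkj⟩ : ∃ k : Fin n, k ≠ i ∧ k ≠ j := by
      by_contra hc
      push_neg at hc
      have hsub : (Finset.univ : Finset (Fin n)) ⊆ {i, j} := by
        intro k _
        rcases eq_or_ne k i with rfl | hki
        · simp
        · simp [hc k hki]
      have := Finset.card_le_card hsub
      simp only [Finset.card_univ, Fintype.card_fin] at this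
      have : n ≤ 2 := le_trans this (le_trans (Finset.card_insert_le _ _) (by simp))
      omega
    have e1 := congrFun (congrFun key k) k
    simp only [Matrix.sub_apply, Matrix.smul_apply, Matrix.one_apply, smul_eq_mul] at e1
    rw [single_mul_apply_of_ne 1 i j k k hki] at e1
    rw [mul_single_apply_of_ne 1 i j k k hkj] at e1
    have hz : single i j (1:F) k k = 0 :=
      single_apply_of_ne i j 1 k k (by tauto)
    rw [hE, hz] at e1
    simp at e1
    rw [e1] at key
    simpa using key
  have offdiag : ∀ k l : Fin n, k ≠ l → Z k l = 0 := by
    intro k l hkl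
    have := congrFun (congrFun (comm l k hkl.symm) k) k
    rw [single_mul_apply_of_ne 1 l k k k hkl] at this
    rw [mul_single_apply_same 1 l k k Z] at this
    simpa using this.symm
  have diag : ∀ i j : Fin n, i ≠ j → Z j j = Z i i := by
    intro i j hij
    have := congrFun (congrFun (comm i j hij) i) j
    rw [single_mul_apply_same 1 i j j Z] at this
    rw [mul_single_apply_same 1 i j i Z] at this
    simpa using this
  refine ⟨Z ⟨0, h0⟩ ⟨0, h0⟩, ?_⟩
  ext k l
  rcases eq_or_ne k l with rfl | hkl
  · rcases eq_or_ne k ⟨0, h0⟩ with rfl | hk0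
    · simp [Matrix.one_apply]
    · simp [Matrix.one_apply, diag ⟨0, h0⟩ k (Ne.symm hk0)]
  · simp [Matrix.one_apply, hkl, offdiag k l hkl]

private noncomputable def pairingMap (n : ℕ) (F : Type*) [Field F] :
    Matrix (Fin n) (Fin n) F →ₗ[F] Module.Dual F (Matrix (Fin n) (Fin n) F) where
  toFun Z := (Matrix.traceLinearMap (Fin n) F F).comp (LinearMap.mulLeft F Z)
  map_add' Z₁ Z₂ := by ext C; simp [Matrix.add_mul]
  map_smul' c Z := by ext C; simp [Matrix.smul_mul]

@[simp] private lemma pairingMap_apply (Z C : Matrix (Fin n) (Fin n) F) :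
    pairingMap n F Z C = (Z * C).trace := rfl

private lemma pairingMap_surjective : Function.Surjective (pairingMap n F) := by
  have hinj : Function.Injective (pairingMap n F) := by
    rw [← LinearMap.ker_eq_bot, LinearMap.ker_eq_bot']
    intro Z hZ
    ext k l
    have := congrFun (congrArg (fun φ => φ.toFun) hZ) (single l k 1)
    simpa [trace_mul_std'] using this
  exact (LinearMap.injective_iff_surjective_of_finrank_eq_finrank
    (Subspace.dual_finrank_eq).symm).mp hinj

private def f1map (a b : SpecialLinearGroup (Fin n) F) :
    Matrix (Fin n) (Fin n) F →ₗ[F] Matrix (Fin n) (Fin n) F where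
  toFun X := (b⁻¹).1 * (X - (a⁻¹).1 * X * a.1) * b.1
  map_add' X Y := by
    simp only [Matrix.mul_add, Matrix.add_mul, Matrix.mul_sub, Matrix.sub_mul]
    abel
  map_smul' c X := by
    simp only [Matrix.mul_smul, Matrix.smul_mul, Matrix.mul_sub, Matrix.sub_mul,
      smul_sub, RingHom.id_apply]

private def f2map (b : SpecialLinearGroup (Fin n) F) :
    Matrix (Fin n) (Fin n) F →ₗ[F] Matrix (Fin n) (Fin n) F where
  toFun Y := Y - (b⁻¹).1 * Y * b.1
  map_add' X Y := by
    simp only [Matrix.mul_add, Matrix.add_mul]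
    abel
  map_smul' c X := by
    simp only [Matrix.mul_smul, Matrix.smul_mul, smul_sub, RingHom.id_apply]

@[simp] private lemma f1map_apply (a b : SpecialLinearGroup (Fin n) F)
    (X : Matrix (Fin n) (Fin n) F) :
    f1map a b X = (b⁻¹).1 * (X - (a⁻¹).1 * X * a.1) * b.1 := rfl

@[simp] private lemma f2map_apply (b : SpecialLinearGroup (Fin n) F)
    (Y : Matrix (Fin n) (Fin n) F) :
    f2map b Y = Y - (b⁻¹).1 * Y * b.1 := rfl

end Aux

theorem stmt_12 (n : ℕ) (hn : 3 ≤ n) (F : Type*) [Field F] [Fintype F]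
    (a b : Matrix.SpecialLinearGroup (Fin n) F)
    (hab : Subgroup.closure {a, b} = (⊤ : Subgroup (Matrix.SpecialLinearGroup (Fin n) F))) :
    ∀ Z : Matrix (Fin n) (Fin n) F, Z.trace = 0 →
      ∃ X Y : Matrix (Fin n) (Fin n) F, X.trace = 0 ∧ Y.trace = 0 ∧
        (b⁻¹).1 * (X - (a⁻¹).1 * X * a.1) * b.1 + (Y - (b⁻¹).1 * Y * b.1) = Z := by
  intro Z hZ
  classical
  -- inverse facts
  have hbinv : (b⁻¹).1 * b.1 = 1 := by
    have : ((b⁻¹ * b : SpecialLinearGroup (Fin n) F)).1 = (b⁻¹).1 * b.1 := rfl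
    rw [← this, inv_mul_cancel]; rfl
  have hbinv' : b.1 * (b⁻¹).1 = 1 := by
    have : ((b * b⁻¹ : SpecialLinearGroup (Fin n) F)).1 = b.1 * (b⁻¹).1 := rfl
    rw [← this, mul_inv_cancel]; rfl
  have hainv : (a⁻¹).1 * a.1 = 1 := by
    have : ((a⁻¹ * a : SpecialLinearGroup (Fin n) F)).1 = (a⁻¹).1 * a.1 := rfl
    rw [← this, inv_mul_cancel]; rfl
  have hainv' : a.1 * (a⁻¹).1 = 1 := by
    have : ((a * a⁻¹ : SpecialLinearGroup (Fin n) F)).1 = a.1 * (a⁻¹).1 := rfl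
    rw [← this, mul_inv_cancel]; rfl
  set sl : Submodule F (Matrix (Fin n) (Fin n) F) :=
    LinearMap.ker (Matrix.traceLinearMap (Fin n) F F) with hsl
  set W : Submodule F (Matrix (Fin n) (Fin n) F) :=
    Submodule.map (f1map a b) sl ⊔ Submodule.map (f2map b) sl with hW
  have hle : sl ≤ W := by
    rw [← Subspace.dualAnnihilator_le_dualAnnihilator_iff]
    intro φ hφ
    obtain ⟨Zd, rfl⟩ := pairingMap_surjective φ
    rw [Submodule.mem_dualAnnihilator] at hφ ⊢
    -- step 1 : Zd - b Zd b⁻¹ is scalar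
    have hbperp : ∀ Y : Matrix (Fin n) (Fin n) F, Y.trace = 0 →
        ((Zd - b.1 * Zd * (b⁻¹).1) * Y).trace = 0 := by
      intro Y hY
      have hmem : f2map b Y ∈ W := by
        apply le_sup_right (α := Submodule F (Matrix (Fin n) (Fin n) F))
        exact Submodule.mem_map.mpr ⟨Y, by simpa [hsl] using hY, rfl⟩
      have h0 := hφ _ hmem
      rw [pairingMap_apply] at h0
      rw [f2map_apply, Matrix.mul_sub, Matrix.trace_sub] at h0
      have e : (Zd * ((b⁻¹).1 * Y * b.1)).trace = ((b.1 * Zd * (b⁻¹).1) * Y).trace := by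
        rw [← Matrix.mul_assoc Zd _ b.1, Matrix.trace_mul_comm _ b.1,
          ← Matrix.mul_assoc, ← Matrix.mul_assoc]
      rw [e] at h0
      rw [Matrix.sub_mul, Matrix.trace_sub]
      exact h0
    obtain ⟨c, hc⟩ := scalar_of_perp_sl hn _ hbperp
    -- step 2 : U - a U a⁻¹ is scalar, where U = b Zd b⁻¹
    have haperp : ∀ X : Matrix (Fin n) (Fin n) F, X.trace = 0 →
        ((b.1 * Zd * (b⁻¹).1 - a.1 * (b.1 * Zd * (b⁻¹).1) * (a⁻¹).1) * X).trace = 0 := by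
      intro X hX
      have hmem : f1map a b X ∈ W := by
        apply le_sup_left (α := Submodule F (Matrix (Fin n) (Fin n) F))
        exact Submodule.mem_map.mpr ⟨X, by simpa [hsl] using hX, rfl⟩
      have h0 := hφ _ hmem
      rw [pairingMap_apply, f1map_apply] at h0
      -- tr(Zd * (b⁻¹ C b)) = tr(U C) with C = X - a⁻¹ X a
      have e0 : (Zd * ((b⁻¹).1 * (X - (a⁻¹).1 * X * a.1) * b.1)).trace
          = ((b.1 * Zd * (b⁻¹).1) * (X - (a⁻¹).1 * X * a.1)).trace := by
        rw [← Matrix.mul_assoc Zd _ b.1, Matrix.trace_mul_comm _ b.1,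
          ← Matrix.mul_assoc, ← Matrix.mul_assoc]
      rw [e0] at h0
      set U := b.1 * Zd * (b⁻¹).1 with hU
      rw [Matrix.mul_sub, Matrix.trace_sub] at h0
      have e1 : (U * ((a⁻¹).1 * X * a.1)).trace = ((a.1 * U * (a⁻¹).1) * X).trace := by
        rw [← Matrix.mul_assoc U _ a.1, Matrix.trace_mul_comm _ a.1,
          ← Matrix.mul_assoc, ← Matrix.mul_assoc]
      rw [e1] at h0
      rw [Matrix.sub_mul, Matrix.trace_sub]
      exact h0
    obtain ⟨d, hd⟩ := scalar_of_perp_sl hn _ haperp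
    -- b ∈ quasiComm Zd
    have hb : b ∈ quasiComm Zd := by
      refine ⟨c, ?_⟩
      have := congrArg (fun M => M * b.1) hc
      simp only [Matrix.sub_mul, Matrix.smul_mul, one_mul,
        Matrix.mul_assoc, hbinv, mul_one] at this
      rw [← this]
      abel
    -- a ∈ quasiComm Zd
    have ha : a ∈ quasiComm Zd := by
      refine ⟨d, ?_⟩
      have hUeq : b.1 * Zd * (b⁻¹).1 = Zd - c • 1 := by
        rw [← hc]; abel
      rw [hUeq] at hd
      have expand : a.1 * (Zd - c • (1 : Matrix (Fin n) (Fin n) F)) * (a⁻¹).1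
          = a.1 * Zd * (a⁻¹).1 - c • 1 := by
        rw [Matrix.mul_sub, Matrix.sub_mul, Matrix.mul_smul, Matrix.smul_mul,
          mul_one, hainv']
      rw [expand] at hd
      have hd' : Zd - a.1 * Zd * (a⁻¹).1 = d • 1 := by rw [← hd]; abel
      have := congrArg (fun M => M * a.1) hd'
      simp only [Matrix.sub_mul, Matrix.smul_mul, one_mul,
        Matrix.mul_assoc, hainv, mul_one] at this
      rw [← this]
      abel
    -- quasiComm Zd = ⊤, hence Zd is scalar
    have htop : quasiComm Zd = ⊤ := by
      apply top_unique
      rw [← hab]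
      apply (Subgroup.closure_le _).mpr
      intro x hx
      rcases hx with rfl | hx
      · exact ha
      · rw [Set.mem_singleton_iff] at hx; subst hx; exact hb
    obtain ⟨z, hz⟩ := scalar_of_quasiComm_top hn Zd htop
    intro Y hY
    have hYt : Y.trace = 0 := by simpa [hsl] using hY
    rw [pairingMap_apply, hz, Matrix.smul_mul, one_mul, Matrix.trace_smul, hYt, smul_zero]
  have hZW : Z ∈ W := hle (by simpa [hsl] using hZ)
  rw [hW, Submodule.mem_sup] at hZW
  obtain ⟨u, hu, v, hv, huv⟩ := hZW
  obtain ⟨X, hX, rfl⟩ := Submodule.mem_map.mp hu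
  obtain ⟨Y, hY, rfl⟩ := Submodule.mem_map.mp hv
  refine ⟨X, Y, by simpa [hsl] using hX, by simpa [hsl] using hY, ?_⟩
  simpa using huv
end

section
/- Let q, m be positive integers and set n := 3m. Let g_1, …, g_m ∈ SL_3(ℤ; q) with g_1 g_2 ⋯ g_m = 1. Then the block-diagonal matrix g := diag(g_1, …, g_m) ∈ SL_n(ℤ) lies in the product set L_n(ℤ;q) · Ũ_n(ℤ;q) · U_n(ℤ;q), where Ũ_n(ℤ;q) := { h k h⁻¹ : k ∈ U_n(ℤ;q), h ∈ SL_n(ℤ) }. -/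
namespace Stmt16

abbrev R3 : Type := Matrix (Fin 3) (Fin 3) ℤ

def blk (m : ℕ) (B : Matrix (Fin m) (Fin m) R3) : Matrix (Fin (3*m)) (Fin (3*m)) ℤ :=
  fun a b => B ⟨(a:ℕ)/3, by have := a.isLt; omega⟩ ⟨(b:ℕ)/3, by have := b.isLt; omega⟩
      ⟨(a:ℕ)%3, by omega⟩ ⟨(b:ℕ)%3, by omega⟩

lemma mul_apply_blocks {m : ℕ} (B C : Matrix (Fin m) (Fin m) R3) (i j : Fin m) (r s : Fin 3) :
    ((B * C) i j) r s = ∑ k : Fin m, ∑ t : Fin 3, B i k r t * C k j t s := by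
  rw [Matrix.mul_apply, Matrix.sum_apply]
  exact Finset.sum_congr rfl fun k _ => Matrix.mul_apply

lemma sum_decomp {m : ℕ} {M : Type*} [AddCommMonoid M] (f : Fin (3*m) → M) :
    ∑ a, f a = ∑ i : Fin m, ∑ r : Fin 3, f ⟨3*i+r, by have := i.isLt; have := r.isLt; omega⟩ := by
  have hb : Function.Bijective (fun p : Fin m × Fin 3 =>
      (⟨3*p.1+p.2, by have := p.1.isLt; have := p.2.isLt; omega⟩ : Fin (3*m))) := by
    constructor
    · rintro ⟨i, r⟩ ⟨i', r'⟩ h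
      have h' : 3*(i:ℕ)+(r:ℕ) = 3*(i':ℕ)+(r':ℕ) := congrArg Fin.val h
      have := r.isLt; have := r'.isLt
      have : (i:ℕ) = i' ∧ (r:ℕ) = r' := by omega
      exact Prod.ext (Fin.ext this.1) (Fin.ext this.2)
    · intro a
      refine ⟨(⟨(a:ℕ)/3, by have := a.isLt; omega⟩, ⟨(a:ℕ)%3, by omega⟩), ?_⟩
      exact Fin.ext (by simp; omega)
  have h := Fintype.sum_bijective _ hb
    (fun p : Fin m × Fin 3 => f ⟨3*p.1+p.2, by have := p.1.isLt; have := p.2.isLt; omega⟩) f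
    (fun p => rfl)
  rw [← h, Fintype.sum_prod_type]

lemma blk_mul {m : ℕ} (B C : Matrix (Fin m) (Fin m) R3) :
    blk m (B * C) = blk m B * blk m C := by
  funext a b
  have lhs : blk m (B * C) a b = ∑ k : Fin m, ∑ t : Fin 3,
      B ⟨(a:ℕ)/3, by have := a.isLt; omega⟩ k ⟨(a:ℕ)%3, by omega⟩ t *
      C k ⟨(b:ℕ)/3, by have := b.isLt; omega⟩ t ⟨(b:ℕ)%3, by omega⟩ :=
    mul_apply_blocks B C _ _ _ _
  rw [lhs, Matrix.mul_apply, sum_decomp]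
  refine Finset.sum_congr rfl fun k _ => Finset.sum_congr rfl fun t _ => ?_
  show _ = blk m B a _ * blk m C _ b
  unfold blk
  have h1 : (⟨(3*(k:ℕ)+(t:ℕ))/3, by have := k.isLt; have := t.isLt; omega⟩ : Fin m) = k :=
    Fin.ext (by have := t.isLt; simp; omega)
  have h2 : (⟨(3*(k:ℕ)+(t:ℕ))%3, by omega⟩ : Fin 3) = t :=
    Fin.ext (by have := t.isLt; simp)
  rw [h1, h2]

lemma blk_one {m : ℕ} : blk m (1 : Matrix (Fin m) (Fin m) R3) = 1 := by
  funext a b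
  show (1 : Matrix (Fin m) (Fin m) R3) _ _ _ _ = (1 : Matrix (Fin (3*m)) (Fin (3*m)) ℤ) a b
  rcases eq_or_ne a b with h | h
  · subst h; simp [Matrix.one_apply]
  · rw [Matrix.one_apply_ne h]
    have hab : (a:ℕ)/3 ≠ (b:ℕ)/3 ∨ (a:ℕ)%3 ≠ (b:ℕ)%3 := by
      by_contra hc
      push_neg at hc
      exact h (Fin.ext (by omega))
    rcases hab with h' | h'
    · rw [Matrix.one_apply_ne (fun hc => h' (by simpa using congrArg Fin.val hc))]
      simp
    · rcases eq_or_ne ((a:ℕ)/3) ((b:ℕ)/3) with h2 | h2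
      · rw [Matrix.one_apply, if_pos (Fin.ext (by simpa using h2)),
          Matrix.one_apply_ne (fun hc => h' (by simpa using congrArg Fin.val hc))]
      · rw [Matrix.one_apply_ne (fun hc => h2 (by simpa using congrArg Fin.val hc))]
        simp


abbrev SL3 := Matrix.SpecialLinearGroup (Fin 3) ℤ

variable {m : ℕ} (g : Fin m → SL3)

def Hp (j : ℕ) : SL3 := ((List.ofFn g).take j).prod

def wm (j : ℕ) : R3 := (Hp g (j+1)).1 - (Hp g j).1

def Xm (j : ℕ) : R3 := ((Hp g j)⁻¹).1
def Ym (j : ℕ) : R3 := (Hp g j).1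

lemma XY (j : ℕ) : Xm g j * (Hp g j).1 = 1 :=
  congrArg Subtype.val (inv_mul_cancel (Hp g j))

lemma YX (j : ℕ) : (Hp g j).1 * Xm g j = 1 :=
  congrArg Subtype.val (mul_inv_cancel (Hp g j))

lemma Hp_succ (j : ℕ) (hj : j < m) : Hp g (j+1) = Hp g j * g ⟨j, hj⟩ := by
  unfold Hp
  rw [List.prod_take_succ _ _ (by simpa using hj)]
  congr 1
  simp

lemma Hp_succ_ge (j : ℕ) (hj : m ≤ j) : Hp g (j+1) = Hp g j := by
  unfold Hp
  rw [List.take_of_length_le (by simp; omega), List.take_of_length_le (by simpa using hj)]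

lemma sum_wm (t : ℕ) : ∑ k ∈ Finset.range t, wm g k = (Hp g t).1 - 1 := by
  induction t with
  | zero => simp [Hp, wm]
  | succ t ih =>
      rw [Finset.sum_range_succ, ih]
      unfold wm
      abel

lemma sum_wm_lt (t : ℕ) (ht : t ≤ m) :
    ∑ k : Fin m, (if (k:ℕ) < t then wm g k else 0) = (Hp g t).1 - 1 := by
  rw [Fin.sum_univ_eq_sum_range (fun k => if k < t then wm g k else 0) m]
  rw [← Finset.sum_subset (Finset.range_subset_range.mpr ht)
    (fun x _ hx => if_neg (by simpa using hx))]
  rw [← sum_wm g t]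
  exact Finset.sum_congr rfl fun x hx => if_pos (by simpa using hx)

lemma sum_wm_lt_mul (t : ℕ) (ht : t ≤ m) (P Q : R3) :
    ∑ k : Fin m, (if (k:ℕ) < t then P * wm g k * Q else 0) = P * ((Hp g t).1 - 1) * Q := by
  have h1 : ∀ k : Fin m, (if (k:ℕ) < t then P * wm g k * Q else 0)
      = P * (if (k:ℕ) < t then wm g k else 0) * Q := by
    intro k; split <;> simp
  rw [Finset.sum_congr rfl fun k _ => h1 k, ← Finset.sum_mul, ← Finset.mul_sum, sum_wm_lt g t ht]

/-! ### block-level matrices -/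

def Ab : Matrix (Fin m) (Fin m) R3 := fun i j => if (j:ℕ) < (i:ℕ) then -(Xm g i * wm g j) else 0
def Nb : Matrix (Fin m) (Fin m) R3 := fun _ j => wm g j
def Bb : Matrix (Fin m) (Fin m) R3 := fun i j => if (i:ℕ) < (j:ℕ) then -(Xm g j * wm g j) else 0
def Mb : Matrix (Fin m) (Fin m) R3 := fun i j => if i = j then (g i).1 else 0
def H0b (_g : Fin m → SL3) : Matrix (Fin m) (Fin m) R3 := fun i j => if (j:ℕ) = 0 then 1 else if i = j then 1 else 0
def Kb : Matrix (Fin m) (Fin m) R3 := fun i j =>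
  (if i = j then 1 else 0) + (if (i:ℕ) = 0 ∧ 0 < (j:ℕ) then wm g j else 0)

lemma hAN (i t : Fin m) : (Ab g * Nb g) i t = (Xm g i - 1) * wm g t := by
  rw [Matrix.mul_apply]
  have h1 : ∀ k : Fin m, Ab g i k * Nb g k t
      = -(if (k:ℕ) < (i:ℕ) then Xm g i * wm g k * wm g t else 0) := by
    intro k
    unfold Ab Nb
    split <;> simp [mul_assoc]
  rw [Finset.sum_congr rfl fun k _ => h1 k, Finset.sum_neg_distrib,
    sum_wm_lt_mul g i (le_of_lt i.isLt) _ _]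
  have h2 : Xm g i * ((Hp g (i:ℕ)).1 - 1) = 1 - Xm g i := by
    rw [mul_sub, mul_one, XY g i]
  rw [h2]
  noncomm_ring

lemma hNB (k j : Fin m) : (Nb g * Bb g) k j = Xm g j * wm g j - wm g j := by
  rw [Matrix.mul_apply]
  have h1 : ∀ t : Fin m, Nb g k t * Bb g t j
      = -(if (t:ℕ) < (j:ℕ) then 1 * wm g t * (Xm g j * wm g j) else 0) := by
    intro t
    unfold Nb Bb
    split <;> simp [mul_assoc]
  rw [Finset.sum_congr rfl fun t _ => h1 t, Finset.sum_neg_distrib,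
    sum_wm_lt_mul g j (le_of_lt j.isLt) _ _]
  have h2 : ((Hp g (j:ℕ)).1 - 1) * (Xm g j * wm g j) = wm g j - Xm g j * wm g j := by
    rw [sub_mul, one_mul, ← mul_assoc, YX g j, one_mul]
  rw [one_mul, h2]
  noncomm_ring

lemma hAB (i j : Fin m) :
    (Ab g * Bb g) i j = Xm g i * ((Hp g (min (i:ℕ) (j:ℕ))).1 - 1) * (Xm g j * wm g j) := by
  rw [Matrix.mul_apply]
  have h1 : ∀ k : Fin m, Ab g i k * Bb g k j
      = (if (k:ℕ) < min (i:ℕ) (j:ℕ) then Xm g i * wm g k * (Xm g j * wm g j) else 0) := by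
    intro k
    unfold Ab Bb
    rcases Nat.lt_or_ge (k:ℕ) (i:ℕ) with h2 | h2 <;> rcases Nat.lt_or_ge (k:ℕ) (j:ℕ) with h3 | h3
    · rw [if_pos h2, if_pos h3, if_pos (lt_min_iff.mpr ⟨h2, h3⟩)]
      simp [mul_assoc]
    · rw [if_pos h2, if_neg (show ¬ ((k:ℕ) < (j:ℕ)) by omega),
        if_neg (show ¬ ((k:ℕ) < min (i:ℕ) (j:ℕ)) by simp only [lt_min_iff]; omega)]
      simp
    · rw [if_neg (show ¬ ((k:ℕ) < (i:ℕ)) by omega),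
        if_neg (show ¬ ((k:ℕ) < min (i:ℕ) (j:ℕ)) by simp only [lt_min_iff]; omega)]
      simp
    · rw [if_neg (show ¬ ((k:ℕ) < (i:ℕ)) by omega),
        if_neg (show ¬ ((k:ℕ) < min (i:ℕ) (j:ℕ)) by simp only [lt_min_iff]; omega)]
      simp
  rw [Finset.sum_congr rfl fun k _ => h1 k,
    sum_wm_lt_mul g _ (by have := i.isLt; have := min_le_left (i:ℕ) (j:ℕ); omega) _ _]

lemma hANB (i j : Fin m) :
    ((Ab g * Nb g) * Bb g) i j = -((Xm g i - 1) * ((Hp g (j:ℕ)).1 - 1) * (Xm g j * wm g j)) := by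
  rw [Matrix.mul_apply]
  have h1 : ∀ t : Fin m, (Ab g * Nb g) i t * Bb g t j
      = -(if (t:ℕ) < (j:ℕ) then (Xm g i - 1) * wm g t * (Xm g j * wm g j) else 0) := by
    intro t
    rw [hAN]
    unfold Bb
    split <;> simp [mul_assoc]
  rw [Finset.sum_congr rfl fun t _ => h1 t, Finset.sum_neg_distrib,
    sum_wm_lt_mul g j (le_of_lt j.isLt) _ _]

/-- main block identity (I) -/
lemma main_I : (1 + Ab g) * (1 + Nb g) * (1 + Bb g) = Mb g := by
  have expand : (1 + Ab g) * (1 + Nb g) * (1 + Bb g)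
      = 1 + Nb g + Ab g + Ab g * Nb g + Bb g + Nb g * Bb g + Ab g * Bb g
        + (Ab g * Nb g) * Bb g := by
    noncomm_ring
  rw [expand]
  funext i j
  simp only [Matrix.add_apply]
  rw [hAN, hNB, hAB, hANB]
  have hNb : Nb g i j = wm g j := rfl
  rw [hNb]
  rcases lt_trichotomy (i:ℕ) (j:ℕ) with hij | hij | hij
  · -- i < j
    have hne : i ≠ j := fun h => by simp [h] at hij
    rw [Matrix.one_apply_ne hne]
    rw [show Ab g i j = 0 from if_neg (by omega), show Bb g i j = -(Xm g j * wm g j) from if_pos hij,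
      show Mb g i j = 0 from if_neg hne, min_eq_left (le_of_lt hij)]
    have e1 : Xm g i * ((Hp g (i:ℕ)).1 - 1) = 1 - Xm g i := by
      rw [mul_sub, mul_one, XY g i]
    have e2 : ((Hp g (j:ℕ)).1 - 1) * (Xm g j * wm g j) = wm g j - Xm g j * wm g j := by
      rw [sub_mul, one_mul, ← mul_assoc, YX g j, one_mul]
    rw [e1, mul_assoc (Xm g i - 1) _ _, e2]
    noncomm_ring
  · -- i = j
    have hij' : i = j := Fin.ext hij
    subst hij'
    rw [Matrix.one_apply_eq]
    rw [show Ab g i i = 0 from if_neg (by omega), show Bb g i i = 0 from if_neg (by omega),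
      show Mb g i i = (g i).1 from if_pos rfl, min_self]
    have e1 : ((Hp g (i:ℕ)).1 - 1) * (Xm g i * wm g i) = wm g i - Xm g i * wm g i := by
      rw [sub_mul, one_mul, ← mul_assoc, YX g i, one_mul]
    have h4 : (g i).1 = 1 + Xm g i * wm g i := by
      have h3 : Ym g i + wm g i = Ym g i * (g i).1 := by
        have hc : (Hp g ((i:ℕ)+1)).1 = Ym g i * (g i).1 := by
          rw [Hp_succ g (i:ℕ) i.isLt]
          show (Hp g (i:ℕ) * g ⟨(i:ℕ), i.isLt⟩).1 = _
          rw [Fin.eta]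
          rfl
        unfold Ym wm
        rw [hc]
        abel
      have hxy : Xm g (i:ℕ) * Ym g (i:ℕ) = 1 := XY g i
      have h5 : Xm g i * (Ym g i + wm g i) = (g i).1 := by
        rw [h3, ← mul_assoc, hxy, one_mul]
      rw [← h5, mul_add, hxy]
    rw [mul_assoc (Xm g i) _ _, e1, mul_assoc (Xm g i - 1) _ _, e1, h4]
    noncomm_ring
  · -- j < i
    have hne : i ≠ j := fun h => by simp [h] at hij
    rw [Matrix.one_apply_ne hne]
    rw [show Ab g i j = -(Xm g i * wm g j) from if_pos hij,
      show Bb g i j = 0 from if_neg (by omega),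
      show Mb g i j = 0 from if_neg hne, min_eq_right (le_of_lt hij)]
    have e2 : ((Hp g (j:ℕ)).1 - 1) * (Xm g j * wm g j) = wm g j - Xm g j * wm g j := by
      rw [sub_mul, one_mul, ← mul_assoc, YX g j, one_mul]
    rw [mul_assoc (Xm g i) _ _, e2, mul_assoc (Xm g i - 1) _ _, e2]
    noncomm_ring


lemma Hp_m (hprod : (List.ofFn g).prod = 1) : Hp g m = 1 := by
  unfold Hp
  rw [List.take_of_length_le (by simp)]
  exact hprod

lemma sum_wm_univ (hprod : (List.ofFn g).prod = 1) : ∑ k : Fin m, wm g k = 0 := by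
  rw [Fin.sum_univ_eq_sum_range (fun k => wm g k) m, sum_wm, Hp_m g hprod]
  simp

/-- main block identity (II) -/
lemma main_II (hm : 0 < m) (hprod : (List.ofFn g).prod = 1) :
    (1 + Nb g) * H0b g = H0b g * Kb g := by
  funext i j
  rw [Matrix.mul_apply, Matrix.mul_apply]
  rcases Nat.eq_zero_or_pos (j:ℕ) with hj | hj
  · have hL : ∀ k : Fin m, (1 + Nb g) i k * H0b g k j
        = (1 : Matrix (Fin m) (Fin m) R3) i k + wm g k := by
      intro k
      rw [show H0b g k j = 1 from if_pos hj, mul_one, Matrix.add_apply]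
      rfl
    have hR : ∀ k : Fin m, H0b g i k * Kb g k j = if k = j then H0b g i k else 0 := by
      intro k
      unfold Kb
      rw [if_neg (show ¬ ((k:ℕ) = 0 ∧ 0 < (j:ℕ)) by omega), add_zero]
      split
      · rw [mul_one]
      · rw [mul_zero]
    rw [Finset.sum_congr rfl fun k _ => hL k, Finset.sum_congr rfl fun k _ => hR k,
      Finset.sum_add_distrib, sum_wm_univ g hprod, add_zero,
      Finset.sum_ite_eq' Finset.univ j (fun k => H0b g i k), if_pos (Finset.mem_univ j),
      show H0b g i j = 1 from if_pos hj]
    simp [Matrix.one_apply]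
  · have hL : ∀ k : Fin m, (1 + Nb g) i k * H0b g k j
        = if k = j then (1 : Matrix (Fin m) (Fin m) R3) i k + wm g k else 0 := by
      intro k
      rw [show H0b g k j = if k = j then 1 else 0 from if_neg (by omega)]
      split
      · rw [mul_one, Matrix.add_apply]; rfl
      · rw [mul_zero]
    have hR : ∀ k : Fin m, H0b g i k * Kb g k j
        = (if k = j then H0b g i k else 0)
          + (if k = (⟨0, hm⟩ : Fin m) then wm g j else 0) := by
      intro k
      unfold Kb
      rw [mul_add]
      congr 1
      · split
        · rw [mul_one]
        · rw [mul_zero]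
      · have hc : ((k:ℕ) = 0 ∧ 0 < (j:ℕ)) ↔ (k = (⟨0, hm⟩ : Fin m)) := by
          constructor
          · rintro ⟨h1, _⟩; exact Fin.ext h1
          · intro h1; exact ⟨congrArg Fin.val h1, hj⟩
        rw [if_congr hc rfl rfl]
        split
        · rename_i hk
          rw [show H0b g i k = 1 from if_pos (by rw [hk])]
          rw [one_mul]
        · rw [mul_zero]
    rw [Finset.sum_congr rfl fun k _ => hL k, Finset.sum_congr rfl fun k _ => hR k,
      Finset.sum_add_distrib,
      Finset.sum_ite_eq' Finset.univ j (fun k => (1 : Matrix (Fin m) (Fin m) R3) i k + wm g k),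
      Finset.sum_ite_eq' Finset.univ j (fun k => H0b g i k),
      Finset.sum_ite_eq' Finset.univ (⟨0, hm⟩ : Fin m) (fun _ => wm g j),
      if_pos (Finset.mem_univ _), if_pos (Finset.mem_univ _), if_pos (Finset.mem_univ _),
      show H0b g i j = if i = j then 1 else 0 from if_neg (by omega), Matrix.one_apply]

lemma dvd_wm (q : ℤ) (hg : ∀ i : Fin m, ∀ r s, q ∣ ((g i).1 r s - (1 : R3) r s))
    (j : ℕ) (r s : Fin 3) : q ∣ wm g j r s := by
  rcases Nat.lt_or_ge j m with hj | hj
  · have hw : wm g j = (Hp g j).1 * ((g ⟨j, hj⟩).1 - 1) := by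
      unfold wm
      rw [Hp_succ g j hj]
      show (Hp g j).1 * (g ⟨j, hj⟩).1 - (Hp g j).1 = _
      rw [mul_sub, mul_one]
    rw [hw, Matrix.mul_apply]
    refine Finset.dvd_sum fun t _ => Dvd.dvd.mul_left ?_ _
    have h2 := hg ⟨j, hj⟩ t s
    simpa [Matrix.sub_apply] using h2
  · rw [show wm g j = 0 by unfold wm; rw [Hp_succ_ge g j hj]; simp]
    simp

lemma dvd_mul_wm (q : ℤ) (hg : ∀ i : Fin m, ∀ r s, q ∣ ((g i).1 r s - (1 : R3) r s))
    (X : R3) (j : ℕ) (r s : Fin 3) : q ∣ (X * wm g j) r s := by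
  rw [Matrix.mul_apply]
  exact Finset.dvd_sum fun t _ => Dvd.dvd.mul_left (dvd_wm g q hg j t s) _


/-! ### simple entry lemmas -/

lemma Ab_diag (i : Fin m) : Ab g i i = 0 := if_neg (lt_irrefl _)
lemma Ab_upper (i j : Fin m) (h : (i:ℕ) ≤ (j:ℕ)) : Ab g i j = 0 := if_neg (by omega)
lemma Ab_lower (i j : Fin m) (h : (j:ℕ) < (i:ℕ)) : Ab g i j = -(Xm g i * wm g j) := if_pos h
lemma Bb_diag (i : Fin m) : Bb g i i = 0 := if_neg (lt_irrefl _)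
lemma Bb_lower (i j : Fin m) (h : (j:ℕ) ≤ (i:ℕ)) : Bb g i j = 0 := if_neg (by omega)
lemma Bb_upper (i j : Fin m) (h : (i:ℕ) < (j:ℕ)) : Bb g i j = -(Xm g j * wm g j) := if_pos h
lemma Kb_diag (i : Fin m) : Kb g i i = 1 := by
  unfold Kb
  rw [if_pos rfl, if_neg (by omega), add_zero]
lemma Kb_lower (i j : Fin m) (h : (j:ℕ) < (i:ℕ)) : Kb g i j = 0 := by
  unfold Kb
  rw [if_neg (fun hc => absurd (congrArg Fin.val hc) (by omega)), if_neg (by omega), add_zero]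
lemma Kb_upper (i j : Fin m) (h : (i:ℕ) < (j:ℕ)) :
    Kb g i j = if (i:ℕ) = 0 ∧ 0 < (j:ℕ) then wm g j else 0 := by
  unfold Kb
  rw [if_neg (fun hc => absurd (congrArg Fin.val hc) (by omega)), zero_add]
lemma H0b_diag (i : Fin m) : H0b g i i = 1 := by
  unfold H0b
  split
  · rfl
  · rw [if_pos rfl]
lemma H0b_upper (i j : Fin m) (h : (i:ℕ) < (j:ℕ)) : H0b g i j = 0 := by
  unfold H0b
  rw [if_neg (by omega), if_neg (fun hc => absurd (congrArg Fin.val hc) (by omega))]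


/-! ### determinants of block triangular assemblies -/

lemma det_blk_lower {m : ℕ} (B : Matrix (Fin m) (Fin m) R3)
    (hdiag : ∀ i, B i i = 1) (hupper : ∀ i j : Fin m, (i:ℕ) < (j:ℕ) → B i j = 0) :
    (blk m B).det = 1 := by
  have hz : ∀ a b : Fin (3*m), (a:ℕ) < (b:ℕ) → blk m B a b = 0 := by
    intro a b hab
    unfold blk
    rcases Nat.lt_or_ge ((a:ℕ)/3) ((b:ℕ)/3) with h | h
    · rw [hupper _ _ (show _ from h)]
      simp
    · have hblk : (a:ℕ)/3 = (b:ℕ)/3 := by omega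
      have hfe : (⟨(a:ℕ)/3, by have := a.isLt; omega⟩ : Fin m)
          = ⟨(b:ℕ)/3, by have := b.isLt; omega⟩ := Fin.ext hblk
      rw [hfe, hdiag]
      refine Matrix.one_apply_ne (fun hc => ?_)
      simp only [Fin.mk.injEq] at hc
      omega
  rw [Matrix.det_of_lowerTriangular (blk m B) (fun i j h => hz i j h)]
  refine Finset.prod_eq_one fun a _ => ?_
  show B _ _ _ _ = 1
  rw [hdiag]
  exact Matrix.one_apply_eq _

lemma det_blk_upper {m : ℕ} (B : Matrix (Fin m) (Fin m) R3)
    (hdiag : ∀ i, B i i = 1) (hlower : ∀ i j : Fin m, (j:ℕ) < (i:ℕ) → B i j = 0) :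
    (blk m B).det = 1 := by
  have hz : ∀ a b : Fin (3*m), (b:ℕ) < (a:ℕ) → blk m B a b = 0 := by
    intro a b hab
    unfold blk
    rcases Nat.lt_or_ge ((b:ℕ)/3) ((a:ℕ)/3) with h | h
    · rw [hlower _ _ (show _ from h)]
      simp
    · have hblk : (a:ℕ)/3 = (b:ℕ)/3 := by omega
      have hfe : (⟨(a:ℕ)/3, by have := a.isLt; omega⟩ : Fin m)
          = ⟨(b:ℕ)/3, by have := b.isLt; omega⟩ := Fin.ext hblk
      rw [hfe, hdiag]
      refine Matrix.one_apply_ne (fun hc => ?_)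
      simp only [Fin.mk.injEq] at hc
      omega
  rw [Matrix.det_of_upperTriangular (show (blk m B).BlockTriangular id from fun i j h => hz i j h)]
  refine Finset.prod_eq_one fun a _ => ?_
  show B _ _ _ _ = 1
  rw [hdiag]
  exact Matrix.one_apply_eq _

def bi {m : ℕ} (a : Fin (3*m)) : Fin m := ⟨(a:ℕ)/3, by have := a.isLt; omega⟩
def br {m : ℕ} (a : Fin (3*m)) : Fin 3 := ⟨(a:ℕ)%3, by omega⟩

lemma blk_apply {m : ℕ} (B : Matrix (Fin m) (Fin m) R3) (a b : Fin (3*m)) :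
    blk m B a b = B (bi a) (bi b) (br a) (br b) := rfl

end Stmt16



/-- The principal congruence subgroup `SL_n(ℤ; q)`: matrices congruent to `1` modulo `q`. -/
def SLcong (n : ℕ) (q : ℤ) : Set (Matrix.SpecialLinearGroup (Fin n) ℤ) :=
  {g | ∀ i j, q ∣ (g.1 i j - (1 : Matrix (Fin n) (Fin n) ℤ) i j)}

/-- `Ũ_n(ℤ;q)`: the set of all `SL_n(ℤ)`-conjugates of elements of `U_n(ℤ;q)`. -/
def Utilde (n : ℕ) (q : ℤ) : Set (Matrix.SpecialLinearGroup (Fin n) ℤ) :=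
  {x | ∃ h : Matrix.SpecialLinearGroup (Fin n) ℤ, ∃ k ∈ Un n q, x = h * k * h⁻¹}

/-- `M` is the block-diagonal `3m × 3m` matrix with `3 × 3` diagonal blocks `g 0, …, g (m-1)`. -/
def IsBlockDiag3 {m : ℕ} (g : Fin m → Matrix (Fin 3) (Fin 3) ℤ)
    (M : Matrix (Fin (3 * m)) (Fin (3 * m)) ℤ) : Prop :=
  ∀ a b : Fin (3 * m),
    M a b = if h : (a : ℕ) / 3 = (b : ℕ) / 3
      then g ⟨(a : ℕ) / 3, by have := a.isLt; omega⟩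
             ⟨(a : ℕ) % 3, by omega⟩ ⟨(b : ℕ) % 3, by omega⟩
      else 0

theorem stmt_16 (q m : ℕ) (hq : 0 < q) (hm : 0 < m)
    (g : Fin m → Matrix.SpecialLinearGroup (Fin 3) ℤ)
    (hg : ∀ i, g i ∈ SLcong 3 q)
    (hprod : (List.ofFn g).prod = 1)
    (M : Matrix.SpecialLinearGroup (Fin (3 * m)) ℤ)
    (hM : IsBlockDiag3 (fun i => (g i).1) M.1) :
    ∃ l ∈ Ln (3 * m) q, ∃ u' ∈ Utilde (3 * m) q, ∃ u ∈ Un (3 * m) q,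
      M = l * u' * u := by
  have hg' : ∀ i : Fin m, ∀ r s : Fin 3, (q:ℤ) ∣ ((g i).1 r s - (1 : Stmt16.R3) r s) :=
    fun i r s => hg i r s
  have hMeq : M.1 = Stmt16.blk m (Stmt16.Mb g) := by
    funext a b
    rw [hM a b]
    unfold Stmt16.blk Stmt16.Mb
    by_cases hab : (a:ℕ)/3 = (b:ℕ)/3
    · rw [dif_pos hab, if_pos (show (⟨(a:ℕ)/3, by have := a.isLt; omega⟩ : Fin m)
        = ⟨(b:ℕ)/3, by have := b.isLt; omega⟩ from Fin.ext hab)]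
    · rw [dif_neg hab, if_neg (fun hc => by
        have h2 : (a:ℕ)/3 = (b:ℕ)/3 := congrArg Fin.val hc
        exact hab h2)]
      simp
  have hdetL : (Stmt16.blk m (1 + Stmt16.Ab g)).det = 1 := by
    refine Stmt16.det_blk_lower _ (fun i => ?_) (fun i j hij => ?_)
    · rw [Matrix.add_apply, Stmt16.Ab_diag, add_zero, Matrix.one_apply_eq]
    · rw [Matrix.add_apply, Stmt16.Ab_upper g i j (le_of_lt hij), add_zero,
        Matrix.one_apply_ne (fun hc => by subst hc; omega)]
  have hdetU : (Stmt16.blk m (1 + Stmt16.Bb g)).det = 1 := by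
    refine Stmt16.det_blk_upper _ (fun i => ?_) (fun i j hji => ?_)
    · rw [Matrix.add_apply, Stmt16.Bb_diag, add_zero, Matrix.one_apply_eq]
    · rw [Matrix.add_apply, Stmt16.Bb_lower g i j (le_of_lt hji), add_zero,
        Matrix.one_apply_ne (fun hc => by subst hc; omega)]
  have hdetH0 : (Stmt16.blk m (Stmt16.H0b g)).det = 1 :=
    Stmt16.det_blk_lower _ (Stmt16.H0b_diag g) (Stmt16.H0b_upper g)
  have hdetK : (Stmt16.blk m (Stmt16.Kb g)).det = 1 :=
    Stmt16.det_blk_upper _ (Stmt16.Kb_diag g) (Stmt16.Kb_lower g)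
  have hI : Stmt16.blk m (1 + Stmt16.Ab g) * Stmt16.blk m (1 + Stmt16.Nb g)
      * Stmt16.blk m (1 + Stmt16.Bb g) = M.1 := by
    rw [← Stmt16.blk_mul, ← Stmt16.blk_mul, Stmt16.main_I g, ← hMeq]
  have hdetT : (Stmt16.blk m (1 + Stmt16.Nb g)).det = 1 := by
    have h := congrArg Matrix.det hI
    rw [Matrix.det_mul, Matrix.det_mul, hdetL, hdetU, M.2] at h
    simpa using h
  refine ⟨⟨Stmt16.blk m (1 + Stmt16.Ab g), hdetL⟩, ?_,
    ⟨Stmt16.blk m (1 + Stmt16.Nb g), hdetT⟩, ?_,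
    ⟨Stmt16.blk m (1 + Stmt16.Bb g), hdetU⟩, ?_, ?_⟩
  · -- l ∈ Ln
    refine ⟨fun a => ?_, fun a b hab => ?_, fun a b hba => ?_⟩
    · show Stmt16.blk m (1 + Stmt16.Ab g) a a = 1
      rw [Stmt16.blk_apply, Matrix.add_apply, Matrix.add_apply, Stmt16.Ab_diag,
        Matrix.zero_apply, add_zero, Matrix.one_apply_eq, Matrix.one_apply_eq]
    · show Stmt16.blk m (1 + Stmt16.Ab g) a b = 0
      have hab' : (a:ℕ) < (b:ℕ) := hab
      rw [Stmt16.blk_apply, Matrix.add_apply, Matrix.add_apply]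
      by_cases hblk : (a:ℕ)/3 = (b:ℕ)/3
      · rw [show Stmt16.bi b = Stmt16.bi a from Fin.ext hblk.symm, Stmt16.Ab_diag,
          Matrix.zero_apply, add_zero, Matrix.one_apply_eq,
          Matrix.one_apply_ne (show Stmt16.br a ≠ Stmt16.br b from fun hc => by
            have h2 : (a:ℕ)%3 = (b:ℕ)%3 := congrArg Fin.val hc
            omega)]
      · rw [Stmt16.Ab_upper g (Stmt16.bi a) (Stmt16.bi b) (show (a:ℕ)/3 ≤ (b:ℕ)/3 by omega),
          Matrix.zero_apply, add_zero,
          Matrix.one_apply_ne (show Stmt16.bi a ≠ Stmt16.bi b from fun hc => by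
            have h2 : (a:ℕ)/3 = (b:ℕ)/3 := congrArg Fin.val hc
            omega), Matrix.zero_apply]
    · show (q:ℤ) ∣ Stmt16.blk m (1 + Stmt16.Ab g) a b
      have hba' : (b:ℕ) < (a:ℕ) := hba
      rw [Stmt16.blk_apply, Matrix.add_apply, Matrix.add_apply]
      by_cases hblk : (a:ℕ)/3 = (b:ℕ)/3
      · rw [show Stmt16.bi b = Stmt16.bi a from Fin.ext hblk.symm, Stmt16.Ab_diag,
          Matrix.zero_apply, add_zero, Matrix.one_apply_eq,
          Matrix.one_apply_ne (show Stmt16.br a ≠ Stmt16.br b from fun hc => by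
            have h2 : (a:ℕ)%3 = (b:ℕ)%3 := congrArg Fin.val hc
            omega)]
        exact dvd_zero _
      · rw [Stmt16.Ab_lower g (Stmt16.bi a) (Stmt16.bi b) (show (b:ℕ)/3 < (a:ℕ)/3 by omega),
          Matrix.one_apply_ne (show Stmt16.bi a ≠ Stmt16.bi b from fun hc => by
            have h2 : (a:ℕ)/3 = (b:ℕ)/3 := congrArg Fin.val hc
            omega), Matrix.zero_apply, zero_add, Matrix.neg_apply]
        exact dvd_neg.mpr (Stmt16.dvd_mul_wm g _ hg' _ _ _ _)
  · -- T ∈ Utilde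
    refine ⟨⟨Stmt16.blk m (Stmt16.H0b g), hdetH0⟩, ⟨Stmt16.blk m (Stmt16.Kb g), hdetK⟩,
      ⟨fun a => ?_, fun a b hba => ?_, fun a b hab => ?_⟩, ?_⟩
    · show Stmt16.blk m (Stmt16.Kb g) a a = 1
      rw [Stmt16.blk_apply, Stmt16.Kb_diag, Matrix.one_apply_eq]
    · show Stmt16.blk m (Stmt16.Kb g) a b = 0
      have hba' : (b:ℕ) < (a:ℕ) := hba
      rw [Stmt16.blk_apply]
      by_cases hblk : (a:ℕ)/3 = (b:ℕ)/3
      · rw [show Stmt16.bi b = Stmt16.bi a from Fin.ext hblk.symm, Stmt16.Kb_diag,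
          Matrix.one_apply_ne (show Stmt16.br a ≠ Stmt16.br b from fun hc => by
            have h2 : (a:ℕ)%3 = (b:ℕ)%3 := congrArg Fin.val hc
            omega)]
      · rw [Stmt16.Kb_lower g (Stmt16.bi a) (Stmt16.bi b) (show (b:ℕ)/3 < (a:ℕ)/3 by omega),
          Matrix.zero_apply]
    · show (q:ℤ) ∣ Stmt16.blk m (Stmt16.Kb g) a b
      have hab' : (a:ℕ) < (b:ℕ) := hab
      rw [Stmt16.blk_apply]
      by_cases hblk : (a:ℕ)/3 = (b:ℕ)/3
      · rw [show Stmt16.bi b = Stmt16.bi a from Fin.ext hblk.symm, Stmt16.Kb_diag,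
          Matrix.one_apply_ne (show Stmt16.br a ≠ Stmt16.br b from fun hc => by
            have h2 : (a:ℕ)%3 = (b:ℕ)%3 := congrArg Fin.val hc
            omega)]
        exact dvd_zero _
      · rw [Stmt16.Kb_upper g (Stmt16.bi a) (Stmt16.bi b) (show (a:ℕ)/3 < (b:ℕ)/3 by omega)]
        split
        · exact Stmt16.dvd_wm g _ hg' _ _ _
        · simp
    · -- conjugation identity
      refine eq_mul_inv_of_mul_eq ?_
      apply Subtype.ext
      show Stmt16.blk m (1 + Stmt16.Nb g) * Stmt16.blk m (Stmt16.H0b g)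
        = Stmt16.blk m (Stmt16.H0b g) * Stmt16.blk m (Stmt16.Kb g)
      rw [← Stmt16.blk_mul, ← Stmt16.blk_mul, Stmt16.main_II g hm hprod]
  · -- u ∈ Un
    refine ⟨fun a => ?_, fun a b hba => ?_, fun a b hab => ?_⟩
    · show Stmt16.blk m (1 + Stmt16.Bb g) a a = 1
      rw [Stmt16.blk_apply, Matrix.add_apply, Matrix.add_apply, Stmt16.Bb_diag,
        Matrix.zero_apply, add_zero, Matrix.one_apply_eq, Matrix.one_apply_eq]
    · show Stmt16.blk m (1 + Stmt16.Bb g) a b = 0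
      have hba' : (b:ℕ) < (a:ℕ) := hba
      rw [Stmt16.blk_apply, Matrix.add_apply, Matrix.add_apply]
      by_cases hblk : (a:ℕ)/3 = (b:ℕ)/3
      · rw [show Stmt16.bi b = Stmt16.bi a from Fin.ext hblk.symm, Stmt16.Bb_diag,
          Matrix.zero_apply, add_zero, Matrix.one_apply_eq,
          Matrix.one_apply_ne (show Stmt16.br a ≠ Stmt16.br b from fun hc => by
            have h2 : (a:ℕ)%3 = (b:ℕ)%3 := congrArg Fin.val hc
            omega)]
      · rw [Stmt16.Bb_lower g (Stmt16.bi a) (Stmt16.bi b) (show (b:ℕ)/3 ≤ (a:ℕ)/3 by omega),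
          Matrix.zero_apply, add_zero,
          Matrix.one_apply_ne (show Stmt16.bi a ≠ Stmt16.bi b from fun hc => by
            have h2 : (a:ℕ)/3 = (b:ℕ)/3 := congrArg Fin.val hc
            omega), Matrix.zero_apply]
    · show (q:ℤ) ∣ Stmt16.blk m (1 + Stmt16.Bb g) a b
      have hab' : (a:ℕ) < (b:ℕ) := hab
      rw [Stmt16.blk_apply, Matrix.add_apply, Matrix.add_apply]
      by_cases hblk : (a:ℕ)/3 = (b:ℕ)/3
      · rw [show Stmt16.bi b = Stmt16.bi a from Fin.ext hblk.symm, Stmt16.Bb_diag,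
          Matrix.zero_apply, add_zero, Matrix.one_apply_eq,
          Matrix.one_apply_ne (show Stmt16.br a ≠ Stmt16.br b from fun hc => by
            have h2 : (a:ℕ)%3 = (b:ℕ)%3 := congrArg Fin.val hc
            omega)]
        exact dvd_zero _
      · rw [Stmt16.Bb_upper g (Stmt16.bi a) (Stmt16.bi b) (show (a:ℕ)/3 < (b:ℕ)/3 by omega),
          Matrix.one_apply_ne (show Stmt16.bi a ≠ Stmt16.bi b from fun hc => by
            have h2 : (a:ℕ)/3 = (b:ℕ)/3 := congrArg Fin.val hc
            omega), Matrix.zero_apply, zero_add, Matrix.neg_apply]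
        exact dvd_neg.mpr (Stmt16.dvd_mul_wm g _ hg' _ _ _ _)
  · -- the product identity
    exact Subtype.ext hI.symm
end
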